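/- arXiv:1502.06131 — 5 statements merged into one kernel-verified Lean document; each statement's English description precedes it below -/
import Mathlib

section
/- Every induced subcomplex of a unimodular simplicial complex is unimodular. -/
open Finset

/-- A (finite) simplicial complex on ground set `V`: a collection of finite subsets of `V`
closed under taking subsets.  (The empty collection, the void complex, is allowed.) -/
structure SComplex (V : Type) where
  faces : Finset (Finset V)
  down_closed : ∀ s ∈ faces, ∀ t ⊆ s, t ∈ faces

/-- An integer matrix, viewed over `ℚ`, has a rank. -/
noncomputable def intRank {m n : Type} [Fintype n] (A : Matrix m n ℤ) : ℕ :=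
  (A.map ((↑·) : ℤ → ℚ)).rank

/-- An integer matrix `A` of rank `d` is unimodular if there is a nonzero `λ` such that
every `d × d` minor of `A` equals `0`, `λ` or `-λ`. -/
def IntUnimodular {m n : Type} [Fintype m] [Fintype n] (A : Matrix m n ℤ) : Prop :=
  ∃ lam : ℤ, lam ≠ 0 ∧ ∀ (r : Fin (intRank A) → m) (c : Fin (intRank A) → n),
    (A.submatrix r c).det = 0 ∨ (A.submatrix r c).det = lam ∨ (A.submatrix r c).det = -lam

/-- A real matrix `A` of rank `d` is unimodular if there is a nonzero `λ` such that
every `d × d` minor of `A` equals `0`, `λ` or `-λ`. -/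
def RealUnimodular {m n : Type} [Fintype m] [Fintype n] (A : Matrix m n ℝ) : Prop :=
  ∃ lam : ℝ, lam ≠ 0 ∧ ∀ (r : Fin A.rank → m) (c : Fin A.rank → n),
    (A.submatrix r c).det = 0 ∨ (A.submatrix r c).det = lam ∨ (A.submatrix r c).det = -lam

namespace SComplex

variable {V W : Type}

/-- The facets of a simplicial complex: its inclusion-maximal faces. -/
def facets [DecidableEq V] (C : SComplex V) : Finset (Finset V) :=
  C.faces.filter fun F => ∀ G ∈ C.faces, F ⊆ G → F = G

/-- The design matrix `A_{C,d}` of the hierarchical model given by the complex `C` and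
the table dimension vector `d`.  Columns are indexed by tuples `i ∈ ∏ v, [d v]`, rows by
pairs `(F, j)` with `F` a facet and `j ∈ ∏_{v ∈ F} [d v]`; the entry is `1` iff the
restriction of `i` to `F` is `j`. -/
def designMatrixD [DecidableEq V] (C : SComplex V) (d : V → ℕ) :
    Matrix ((F : {F // F ∈ C.facets}) × ((v : {v // v ∈ F.1}) → Fin (d v.1)))
      ((v : V) → Fin (d v)) ℤ :=
  fun r i => if ∀ v : {v // v ∈ r.1.1}, i v.1 = r.2 v then 1 else 0

/-- The binary design matrix `A_C = A_{C,2}`. -/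
def designMatrix [DecidableEq V] (C : SComplex V) := designMatrixD C fun _ => 2

/-- A simplicial complex is unimodular if its binary design matrix is unimodular. -/
def IsUnimodular [DecidableEq V] [Fintype V] (C : SComplex V) : Prop :=
  IntUnimodular (designMatrix C)

/-- The Alexander dual `C* = {S : Sᶜ ∉ C}`. -/
def dual [DecidableEq V] [Fintype V] (C : SComplex V) : SComplex V where
  faces := univ.filter fun s => sᶜ ∉ C.faces
  down_closed := by
    intro s hs t ht
    simp only [mem_filter, mem_univ, true_and] at hs ⊢
    intro h
    exact hs (C.down_closed _ h _ (compl_subset_compl.mpr ht))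

/-- The induced subcomplex of `C` on a vertex subset `A`. -/
def induce [DecidableEq V] (C : SComplex V) (A : Finset V) :
    SComplex {v // v ∈ A} where
  faces := univ.filter fun s => s.map (Function.Embedding.subtype fun v => v ∈ A) ∈ C.faces
  down_closed := by
    intro s hs t ht
    simp only [mem_filter, mem_univ, true_and] at hs ⊢
    exact C.down_closed _ hs _ (map_subset_map.mpr ht)

/-- The link of a set `S` in `C`, as a complex on the ground set `Sᶜ`:
`link_S(C) = {F \ S : F ∈ C, S ⊆ F}`. -/
def link [DecidableEq V] [Fintype V] (C : SComplex V) (S : Finset V) :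
    SComplex {v // v ∈ Sᶜ} where
  faces := univ.filter fun s =>
    s.map (Function.Embedding.subtype fun v => v ∈ Sᶜ) ∪ S ∈ C.faces
  down_closed := by
    intro s hs t ht
    simp only [mem_filter, mem_univ, true_and] at hs ⊢
    exact C.down_closed _ hs _ (union_subset_union_left (map_subset_map.mpr ht))

/-- The minor `link_R(C \ S)` of `C`, a complex on the ground set `(R ∪ S)ᶜ`. -/
def minorAt [DecidableEq V] [Fintype V] (C : SComplex V) (R S : Finset V) :
    SComplex {v // v ∈ (R ∪ S)ᶜ} where
  faces := univ.filter fun s =>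
    s.map (Function.Embedding.subtype fun v => v ∈ (R ∪ S)ᶜ) ∪ R ∈ C.faces
  down_closed := by
    intro s hs t ht
    simp only [mem_filter, mem_univ, true_and] at hs ⊢
    exact C.down_closed _ hs _ (union_subset_union_left (map_subset_map.mpr ht))

/-- Isomorphism of simplicial complexes: a bijection of ground sets carrying faces to faces. -/
def Isomorphic [DecidableEq W] (C : SComplex V) (D : SComplex W) : Prop :=
  ∃ e : V ≃ W, ∀ s : Finset V, s ∈ C.faces ↔ s.image (⇑e) ∈ D.faces

/-- `D` is a minor of `C` if `D` is isomorphic to `link_R(C \ S)` for some face `R` of `C`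
and vertex set `S` disjoint from `R`. -/
def IsMinor [DecidableEq V] [Fintype V] [DecidableEq W] (D : SComplex W) (C : SComplex V) :
    Prop :=
  ∃ R S : Finset V, Disjoint R S ∧ R ∈ C.faces ∧ D.Isomorphic (C.minorAt R S)

/-- The simplicial complex generated by a given collection of sets. -/
def gen [DecidableEq V] [Fintype V] (gens : Finset (Finset V)) : SComplex V where
  faces := univ.filter fun s => ∃ g ∈ gens, s ⊆ g
  down_closed := by
    intro s hs t ht
    simp only [mem_filter, mem_univ, true_and] at hs ⊢
    obtain ⟨g, hg, hsg⟩ := hs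
    exact ⟨g, hg, ht.trans hsg⟩

/-- The cone over `C`: one new vertex (the last one) is added to every face. -/
def cone {n : ℕ} (C : SComplex (Fin n)) : SComplex (Fin (n + 1)) where
  faces := univ.filter fun s => (univ.filter fun v : Fin n => v.castSucc ∈ s) ∈ C.faces
  down_closed := by
    intro s hs t ht
    simp only [mem_filter, mem_univ, true_and] at hs ⊢
    refine C.down_closed _ hs _ ?_
    intro v hv
    simp only [mem_filter, mem_univ, true_and] at hv ⊢
    exact ht hv

/-- Adding one ghost vertex (the last one) to `C`. -/
def ghost {n : ℕ} (C : SComplex (Fin n)) : SComplex (Fin (n + 1)) where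
  faces := univ.filter fun s => Fin.last n ∉ s ∧
    (univ.filter fun v : Fin n => v.castSucc ∈ s) ∈ C.faces
  down_closed := by
    intro s hs t ht
    simp only [mem_filter, mem_univ, true_and] at hs ⊢
    refine ⟨fun h => hs.1 (ht h), C.down_closed _ hs.2 _ ?_⟩
    intro v hv
    simp only [mem_filter, mem_univ, true_and] at hv ⊢
    exact ht hv

/-- The iterated cone `cone^p(C)`. -/
def conePow {n : ℕ} : (p : ℕ) → SComplex (Fin n) → SComplex (Fin (n + p))
  | 0, C => C
  | p + 1, C => cone (conePow p C)

/-- Adding `p` ghost vertices `G^p(C)`. -/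
def ghostPow {n : ℕ} : (p : ℕ) → SComplex (Fin n) → SComplex (Fin (n + p))
  | 0, C => C
  | p + 1, C => ghost (ghostPow p C)

/-- The embedding `Fin n ↪ Fin (n+1)` by `castSucc`. -/
def castSuccEmb' {n : ℕ} : Fin n ↪ Fin (n + 1) :=
  ⟨Fin.castSucc, Fin.castSucc_injective n⟩

/-- The Lawrence lifting `Λ(C)`: its facets are the old ground set `[n]` (a big facet)
together with `F ∪ {n+1}` for each facet `F` of `C`. -/
def lawrence {n : ℕ} (C : SComplex (Fin n)) : SComplex (Fin (n + 1)) :=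
  gen (insert ((univ : Finset (Fin n)).map castSuccEmb')
    (C.facets.image fun F => insert (Fin.last n) (F.map castSuccEmb')))

/-- The disjoint union `Δ_m ⊔ Δ_k` of an `m`-simplex (on the first `m+1` vertices) and
a `k`-simplex (on the remaining `k+1` vertices). -/
def disjSimplices (m k : ℕ) : SComplex (Fin (m + k + 2)) :=
  gen {univ.filter fun x : Fin (m + k + 2) => (x : ℕ) ≤ m,
    univ.filter fun x : Fin (m + k + 2) => m < (x : ℕ)}

/-- The full simplex on `k` vertices (i.e. `Δ_{k-1}`; for `k = 0` this is `Δ_{-1} = {∅}`). -/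
def fullSimplexC (k : ℕ) : SComplex (Fin k) where
  faces := univ
  down_closed := fun _ _ t _ => mem_univ t

/-- The void complex `Δ_{-2} = {}`. -/
def voidC : SComplex (Fin 0) where
  faces := ∅
  down_closed := by simp

/-- `∂Δ_k ⊔ {v}`: the boundary of a `k`-simplex together with one extra disjoint vertex. -/
def bdyDisjPt (k : ℕ) : SComplex (Fin (k + 2)) where
  faces := univ.filter fun s =>
    s ⊂ (univ.filter fun x : Fin (k + 2) => (x : ℕ) < k + 1) ∨ s = {Fin.last (k + 1)}
  down_closed := by
    intro s hs t ht
    simp only [mem_filter, mem_univ, true_and] at hs ⊢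
    rcases hs with hs | rfl
    · exact Or.inl (lt_of_le_of_lt ht hs)
    · rcases Finset.subset_singleton_iff.mp ht with rfl | rfl
      · refine Or.inl (Finset.empty_ssubset.mpr ⟨⟨0, by omega⟩, ?_⟩)
        simp
      · exact Or.inr rfl

/-- The path `P_4` on four vertices. -/
def P4 : SComplex (Fin 4) := gen {{0, 1}, {1, 2}, {2, 3}}

/-- The four-cycle `C_4`. -/
def C4 : SComplex (Fin 4) := gen {{0, 1}, {1, 2}, {2, 3}, {0, 3}}

/-- The boundary of the octahedron, with antipodal vertex pairs `(0,3)`, `(1,4)`, `(2,5)`. -/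
def O6 : SComplex (Fin 6) :=
  gen {{0, 1, 2}, {0, 1, 5}, {0, 4, 2}, {0, 4, 5}, {3, 1, 2}, {3, 1, 5}, {3, 4, 2}, {3, 4, 5}}

/-- The complex `J_1` on five vertices with facets `12, 15, 234, 345`. -/
def J1 : SComplex (Fin 5) := gen {{0, 1}, {0, 4}, {1, 2, 3}, {2, 3, 4}}

/-- The complex `J_2` on five vertices with facets `12, 235, 34, 145`. -/
def J2 : SComplex (Fin 5) := gen {{0, 1}, {1, 2, 4}, {2, 3}, {0, 3, 4}}

/-- The nuclear complexes (on `Fin` ground sets), built from disjoint unions of two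
simplices, duals thereof, and simplices, by repeatedly coning, adding ghost vertices
and taking Lawrence liftings. -/
inductive Nuclear : {n : ℕ} → SComplex (Fin n) → Prop
  | lawrence {n : ℕ} {D : SComplex (Fin n)} : Nuclear D → Nuclear D.lawrence
  | ghost {n : ℕ} {D : SComplex (Fin n)} : Nuclear D → Nuclear D.ghost
  | coneDisj (p m k : ℕ) : Nuclear (conePow p (disjSimplices m k))
  | coneDualDisj (p m k : ℕ) : Nuclear (conePow p (dual (disjSimplices (m + 1) (k + 1))))
  | simplex (k : ℕ) : Nuclear (fullSimplexC k)
  | void : Nuclear voidC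

/-- A complex on an arbitrary ground set is nuclear if it is isomorphic to a nuclear
complex on a `Fin` ground set. -/
def IsNuclear (C : SComplex V) : Prop :=
  ∃ (k : ℕ) (D : SComplex (Fin k)), Nuclear D ∧ C.Isomorphic D

/-- `C` is β-avoiding if no minor of `C` is isomorphic to `P_4`, `O_6`, `O_6*`, `J_1`,
`J_1*`, `J_2`, or `∂Δ_k ⊔ {v}` for some `k ≥ 1`. -/
def BetaAvoiding [DecidableEq V] [Fintype V] (C : SComplex V) : Prop :=
  ¬ IsMinor P4 C ∧ ¬ IsMinor O6 C ∧ ¬ IsMinor (dual O6) C ∧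
  ¬ IsMinor J1 C ∧ ¬ IsMinor (dual J1) C ∧ ¬ IsMinor J2 C ∧
  ∀ k : ℕ, 1 ≤ k → ¬ IsMinor (bdyDisjPt k) C

/-- The 1-skeleton of a complex, as a simple graph. -/
def oneSkeleton [DecidableEq V] (C : SComplex V) : SimpleGraph V where
  Adj u v := u ≠ v ∧ ({u, v} : Finset V) ∈ C.faces
  symm := by
    constructor
    intro u v h
    exact ⟨h.1.symm, by rw [Finset.pair_comm]; exact h.2⟩
  loopless := by
    constructor
    intro u h
    exact h.1 rfl

/-- The non-ghost vertices of `C`: those `v` with `{v}` a face. -/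
def nonGhost [DecidableEq V] [Fintype V] (C : SComplex V) : Finset V :=
  univ.filter fun v => ({v} : Finset V) ∈ C.faces

/-- `S` is a minimal nonface of `C`: not a face, but all proper subsets are faces. -/
def MinNonface (C : SComplex V) (S : Finset V) : Prop :=
  S ∉ C.faces ∧ ∀ t ⊂ S, t ∈ C.faces

end SComplex

namespace SComplex

variable {V : Type} [DecidableEq V]

/-- The row index type of the binary design matrix. -/
abbrev DRow (C : SComplex V) : Type :=
  (F : {F // F ∈ C.facets}) × ((v : {v // v ∈ F.1}) → Fin 2)

lemma designMatrix_apply (C : SComplex V) (r : DRow C) (i : V → Fin 2) :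
    designMatrix C r i = if ∀ v : {v // v ∈ r.1.1}, i v.1 = r.2 v then 1 else 0 := rfl

lemma mem_facets_iff (C : SComplex V) {F : Finset V} :
    F ∈ C.facets ↔ F ∈ C.faces ∧ ∀ G ∈ C.faces, F ⊆ G → F = G := by
  simp [facets, mem_filter]

lemma exists_facet (C : SComplex V) {G : Finset V} (hG : G ∈ C.faces) :
    ∃ F, F ∈ C.facets ∧ G ⊆ F := by
  obtain ⟨F, hF, hmax⟩ := (C.faces.filter (fun H => G ⊆ H)).exists_max_image
      (fun H => H.card) ⟨G, by simp [mem_filter, hG]⟩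
  rw [mem_filter] at hF
  refine ⟨F, (C.mem_facets_iff).2 ⟨hF.1, ?_⟩, hF.2⟩
  intro H hH hFH
  exact Finset.eq_of_subset_of_card_le hFH (hmax H (mem_filter.2 ⟨hH, hF.2.trans hFH⟩))

noncomputable def facetAt (C : SComplex V) {G : Finset V} (hG : G ∈ C.faces) :
    {F // F ∈ C.facets} :=
  ⟨(C.exists_facet hG).choose, (C.exists_facet hG).choose_spec.1⟩

lemma subset_facetAt (C : SComplex V) {G : Finset V} (hG : G ∈ C.faces) :
    G ⊆ (C.facetAt hG).1 :=
  (C.exists_facet hG).choose_spec.2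

lemma facetAt_mem_faces (C : SComplex V) {G : Finset V} (hG : G ∈ C.faces) :
    (C.facetAt hG).1 ∈ C.faces :=
  (C.mem_facets_iff.1 (C.facetAt hG).2).1

/-- The row of the design matrix associated to a face `G`: the chosen facet containing `G`,
with value pattern the indicator of `G`. -/
noncomputable def rowAt (C : SComplex V) {G : Finset V} (hG : G ∈ C.faces) : DRow C :=
  ⟨C.facetAt hG, fun v => if v.1 ∈ G then 1 else 0⟩

/-- The column of the design matrix associated to a set `G`: its indicator tuple. -/
def colAt (G : Finset V) : V → Fin 2 := fun v => if v ∈ G then 1 else 0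

lemma designMatrix_rowAt_colAt_ne {C : SComplex V} {G G' : Finset V} (hG : G ∈ C.faces)
    (h : designMatrix C (C.rowAt hG) (colAt G') ≠ 0) : G ⊆ G' := by
  rw [designMatrix_apply] at h
  have hc : ∀ v : {v // v ∈ (C.facetAt hG).1}, colAt G' v.1 = (if v.1 ∈ G then (1 : Fin 2) else 0) := by
    by_contra hcc
    exact h (if_neg hcc)
  intro x hx
  have hxF : x ∈ (C.facetAt hG).1 := C.subset_facetAt hG hx
  have h2 := hc ⟨x, hxF⟩
  simp only [colAt] at h2
  rw [if_pos hx] at h2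
  by_contra hx'
  rw [if_neg hx'] at h2
  exact absurd h2 (by decide)

lemma designMatrix_rowAt_colAt_self {C : SComplex V} {G : Finset V} (hG : G ∈ C.faces) :
    designMatrix C (C.rowAt hG) (colAt G) = 1 := by
  rw [designMatrix_apply, if_pos]
  intro v
  rfl

/-- A square matrix indexed by a family of finsets which is "triangular with respect to
inclusion" and has unit diagonal has determinant 1. -/
lemma det_subsetTriangular {R : Type} [CommRing R] {s : Finset (Finset V)}
    (A : Matrix {G // G ∈ s} {G // G ∈ s} R)
    (h : ∀ g g', A g g' ≠ 0 → g.1 ⊆ g'.1) (hd : ∀ g, A g g = 1) : A.det = 1 := by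
  classical
  rw [Matrix.det_apply]
  rw [Finset.sum_eq_single (1 : Equiv.Perm {G // G ∈ s})]
  · simp [hd]
  · intro σ _ hσ
    have hex : ∃ i, A (σ i) i = 0 := by
      by_contra hc
      push_neg at hc
      have hsub : ∀ i : {G // G ∈ s}, (σ i).1 ⊆ i.1 := fun i => h _ _ (hc i)
      have hcard : ∀ i ∈ Finset.univ, ((σ i).1.card) ≤ i.1.card :=
        fun i _ => Finset.card_le_card (hsub i)
      have hsum : ∑ i : {G // G ∈ s}, (σ i).1.card = ∑ i : {G // G ∈ s}, i.1.card :=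
        Equiv.sum_comp σ (fun i => i.1.card)
      have heq := (Finset.sum_eq_sum_iff_of_le hcard).1 hsum
      apply hσ
      apply Equiv.ext
      intro i
      exact Subtype.ext (Finset.eq_of_subset_of_card_le (hsub i)
        (heq i (Finset.mem_univ i)).ge)
    obtain ⟨i, hi⟩ := hex
    have hz : ∏ j : {G // G ∈ s}, A (σ j) j = 0 :=
      Finset.prod_eq_zero (Finset.mem_univ i) hi
    rw [hz, smul_zero]
  · intro h1
    exact absurd (Finset.mem_univ _) h1

/-- Any (generalized) submatrix has smaller rank. -/
lemma rank_submatrix_le'' {m n m' n' : Type} [Fintype m] [Fintype n] [Fintype m'] [Fintype n']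
    [DecidableEq m] [DecidableEq n] {R : Type} [Field R]
    (A : Matrix m n R) (f : m' → m) (g : n' → n) :
    (A.submatrix f g).rank ≤ A.rank := by
  have h1 : (Matrix.of fun (i : m') (k : m) => if f i = k then (1:R) else 0) * A
      = A.submatrix f id := by
    ext i l
    simp [Matrix.mul_apply, ite_mul, Finset.sum_ite_eq]
  have h2 : (A.submatrix f id) * (Matrix.of fun (k : n) (j : n') => if k = g j then (1:R) else 0)
      = A.submatrix f g := by
    ext i j
    simp [Matrix.mul_apply, mul_ite, Finset.sum_ite_eq']
  have h3 : A.submatrix f g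
      = (Matrix.of fun (i : m') (k : m) => if f i = k then (1:R) else 0) * A *
        (Matrix.of fun (k : n) (j : n') => if k = g j then (1:R) else 0) := by
    rw [h1, h2]
  rw [h3]
  exact (Matrix.rank_mul_le_left _ _).trans (Matrix.rank_mul_le_right _ _)

end SComplex

set_option linter.unusedSectionVars false
namespace SComplex

variable {V : Type} [DecidableEq V]

set_option linter.unusedSectionVars false in
lemma mem_map_subtypeEmb_iff {A : Finset V} {s : Finset {v // v ∈ A}} {x : V} :
    x ∈ s.map (Function.Embedding.subtype fun v => v ∈ A) ↔
      ∃ h : x ∈ A, (⟨x, h⟩ : {v // v ∈ A}) ∈ s := by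
  simp only [Finset.mem_map, Function.Embedding.coe_subtype]
  constructor
  · rintro ⟨⟨y, hy⟩, hys, rfl⟩
    exact ⟨hy, hys⟩
  · rintro ⟨h, hs⟩
    exact ⟨⟨x, h⟩, hs, rfl⟩

/-- The support of a row: the set of vertices where the pattern `j` is `1`. -/
def rowSupp (C : SComplex V) (r : DRow C) : Finset V :=
  (r.1.1.attach.filter (fun v => r.2 v = 1)).map (Function.Embedding.subtype _)

lemma mem_rowSupp {C : SComplex V} {r : DRow C} {x : V} :
    x ∈ rowSupp C r ↔ ∃ h : x ∈ r.1.1, r.2 ⟨x, h⟩ = 1 := by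
  rw [rowSupp, mem_map_subtypeEmb_iff]
  simp [Finset.mem_filter]

lemma rowSupp_subset {C : SComplex V} (r : DRow C) : rowSupp C r ⊆ r.1.1 := by
  intro x hx
  exact (mem_rowSupp.1 hx).choose

variable [Fintype V]

/-- The support of a column. -/
def colSupp (i : V → Fin 2) : Finset V := Finset.univ.filter (fun v => i v = 1)

lemma designMatrix_cond_iff (C : SComplex V) (r : DRow C) (i : V → Fin 2) :
    (∀ v : {v // v ∈ r.1.1}, i v.1 = r.2 v) ↔ r.1.1 ∩ colSupp i = rowSupp C r := by
  have fin2 : ∀ a b : Fin 2, (a = 1 ↔ b = 1) → a = b := by decide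
  constructor
  · intro h
    ext x
    simp only [Finset.mem_inter, colSupp, Finset.mem_filter, Finset.mem_univ, true_and,
      mem_rowSupp]
    constructor
    · rintro ⟨hxF, hx1⟩
      exact ⟨hxF, by rw [← h ⟨x, hxF⟩]; exact hx1⟩
    · rintro ⟨hxF, hx2⟩
      exact ⟨hxF, by rw [h ⟨x, hxF⟩]; exact hx2⟩
  · intro h v
    apply fin2
    constructor
    · intro h1
      have hx : v.1 ∈ r.1.1 ∩ colSupp i := by
        simp only [Finset.mem_inter, colSupp, Finset.mem_filter, Finset.mem_univ, true_and]
        exact ⟨v.2, h1⟩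
      rw [h] at hx
      obtain ⟨hm, he⟩ := mem_rowSupp.1 hx
      have : (⟨v.1, hm⟩ : {v // v ∈ r.1.1}) = v := Subtype.ext rfl
      rwa [this] at he
    · intro h1
      have hx : v.1 ∈ rowSupp C r := mem_rowSupp.2 ⟨v.2, by
        have : (⟨v.1, v.2⟩ : {v // v ∈ r.1.1}) = v := Subtype.ext rfl
        rwa [this]⟩
      rw [← h] at hx
      simp only [Finset.mem_inter, colSupp, Finset.mem_filter] at hx
      exact hx.2.2

lemma sum_Icc_neg_one_pow {s u : Finset V} (h : s ⊆ u) :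
    ∑ G ∈ Finset.Icc s u, (-1:ℚ)^((G \ s).card) = if u = s then 1 else 0 := by
  have key : ∑ G ∈ Finset.Icc s u, (-1:ℚ)^((G \ s).card)
      = ∑ H ∈ (u \ s).powerset, (-1:ℚ)^H.card := by
    refine Finset.sum_bij' (fun G _ => G \ s) (fun H _ => s ∪ H) ?_ ?_ ?_ ?_ ?_
    · intro G hG
      rw [Finset.mem_Icc] at hG
      rw [Finset.mem_powerset]
      exact Finset.sdiff_subset_sdiff hG.2 subset_rfl
    · intro H hH
      rw [Finset.mem_powerset] at hH
      rw [Finset.mem_Icc]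
      exact ⟨Finset.subset_union_left, Finset.union_subset h (hH.trans (Finset.sdiff_subset))⟩
    · intro G hG
      rw [Finset.mem_Icc] at hG
      exact Finset.union_sdiff_of_subset hG.1
    · intro H hH
      rw [Finset.mem_powerset] at hH
      exact Finset.union_sdiff_cancel_left
        (Finset.disjoint_of_subset_right hH Finset.disjoint_sdiff)
    · intro G hG
      rfl
  rw [key]
  have h2 : ∑ H ∈ (u \ s).powerset, (-1:ℚ)^H.card
      = (((∑ H ∈ (u \ s).powerset, (-1:ℤ)^H.card : ℤ)) : ℚ) := by
    push_cast
    rfl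
  rw [h2, Finset.sum_powerset_neg_one_pow_card]
  have h3 : (u \ s = ∅) = (u = s) := by
    rw [Finset.sdiff_eq_empty_iff_subset]
    exact propext ⟨fun hh => subset_antisymm hh h, fun hh => hh.le⟩
  by_cases hc : u = s
  · rw [if_pos hc, if_pos (h3 ▸ hc : u \ s = ∅)]
    norm_num
  · rw [if_neg hc, if_neg (fun hh => hc (h3 ▸ hh))]
    norm_num

end SComplex

set_option linter.unusedSectionVars false
namespace SComplex

variable {V : Type} [DecidableEq V] [Fintype V]

/-- Left factor in the rank factorization of the design matrix. -/
def rankP (C : SComplex V) : Matrix (DRow C) {G // G ∈ C.faces} ℚ :=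
  fun r G => if rowSupp C r ⊆ G.1 ∧ G.1 ⊆ r.1.1
    then (-1:ℚ)^((G.1 \ rowSupp C r).card) else 0

/-- Right factor in the rank factorization of the design matrix. -/
def rankQ (C : SComplex V) : Matrix {G // G ∈ C.faces} (V → Fin 2) ℚ :=
  fun G i => if G.1 ⊆ colSupp i then 1 else 0

lemma designMatrix_eq_mul (C : SComplex V) :
    (designMatrix C).map ((↑·) : ℤ → ℚ) = rankP C * rankQ C := by
  ext r i
  have hF : r.1.1 ∈ C.faces := (C.mem_facets_iff.1 r.1.2).1
  have hsF : rowSupp C r ⊆ r.1.1 := rowSupp_subset r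
  have hstep1 : (rankP C * rankQ C) r i
      = ∑ G ∈ C.faces, (if (rowSupp C r ⊆ G ∧ G ⊆ r.1.1) ∧ G ⊆ colSupp i
          then (-1:ℚ)^((G \ rowSupp C r).card) else 0) := by
    rw [Matrix.mul_apply, ← Finset.sum_coe_sort C.faces]
    refine Finset.sum_congr rfl fun G _ => ?_
    unfold rankP rankQ
    split_ifs with h1 h2 h3 h3 <;> simp_all
  rw [hstep1, Matrix.map_apply, designMatrix_apply, ← Finset.sum_filter,
    apply_ite ((↑·) : ℤ → ℚ)]
  push_cast
  by_cases hsT : rowSupp C r ⊆ colSupp i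
  · have hfil : C.faces.filter (fun G => (rowSupp C r ⊆ G ∧ G ⊆ r.1.1) ∧ G ⊆ colSupp i)
        = Finset.Icc (rowSupp C r) (r.1.1 ∩ colSupp i) := by
      ext G
      constructor
      · intro hG
        obtain ⟨-, ⟨h1, h2⟩, h3⟩ := Finset.mem_filter.1 hG
        exact Finset.mem_Icc.2 ⟨h1, Finset.subset_inter h2 h3⟩
      · intro hG
        obtain ⟨h1, h2⟩ := Finset.mem_Icc.1 hG
        have h2F := h2.trans Finset.inter_subset_left
        have h2T := h2.trans Finset.inter_subset_right
        exact Finset.mem_filter.2 ⟨C.down_closed _ hF _ h2F, ⟨h1, h2F⟩, h2T⟩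
    rw [hfil, sum_Icc_neg_one_pow (Finset.subset_inter hsF hsT)]
    exact if_congr (designMatrix_cond_iff C r i) rfl rfl
  · have hfil : C.faces.filter (fun G => (rowSupp C r ⊆ G ∧ G ⊆ r.1.1) ∧ G ⊆ colSupp i)
        = ∅ := by
      ext G
      simp only [Finset.mem_filter, Finset.notMem_empty, iff_false, not_and]
      rintro - ⟨h1, -⟩ h3
      exact hsT (h1.trans h3)
    rw [hfil, Finset.sum_empty, if_neg]
    intro hc
    have hh := (designMatrix_cond_iff C r i).1 hc
    exact hsT (hh ▸ Finset.inter_subset_right)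

/-- The rank of the binary design matrix equals the number of faces. -/
lemma intRank_designMatrix (C : SComplex V) :
    intRank (designMatrix C) = C.faces.card := by
  apply le_antisymm
  · rw [intRank, designMatrix_eq_mul]
    exact (Matrix.rank_mul_le_right _ _).trans
      ((Matrix.rank_le_card_height _).trans_eq (Fintype.card_coe _))
  · rw [intRank]
    set Mq := (designMatrix C).map ((↑·) : ℤ → ℚ) with hMq
    let E : Matrix {G // G ∈ C.faces} {G // G ∈ C.faces} ℚ :=
      Mq.submatrix (fun G => C.rowAt G.2) (fun G => colAt G.1)
    have hE : ∀ g g' : {G // G ∈ C.faces},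
        E g g' = ((designMatrix C (C.rowAt g.2) (colAt g'.1) : ℤ) : ℚ) := fun g g' => rfl
    have hdet : E.det = 1 := by
      refine det_subsetTriangular E (fun g g' h => ?_) (fun g => ?_)
      · refine designMatrix_rowAt_colAt_ne g.2 (fun hz => h ?_)
        rw [hE, hz]
        norm_num
      · rw [hE, designMatrix_rowAt_colAt_self g.2]
        norm_num
    have hunit : IsUnit E := by
      rw [Matrix.isUnit_iff_isUnit_det, hdet]
      exact isUnit_one
    have hrankE : E.rank = Fintype.card {G // G ∈ C.faces} := Matrix.rank_of_isUnit E hunit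
    calc C.faces.card = E.rank := by rw [hrankE, Fintype.card_coe]
      _ ≤ Mq.rank := rank_submatrix_le'' Mq _ _

end SComplex

set_option linter.unusedSectionVars false
namespace SComplex

variable {V : Type} [DecidableEq V]

lemma mem_induce_faces (C : SComplex V) (A : Finset V) {s : Finset {v // v ∈ A}} :
    s ∈ (C.induce A).faces ↔ s.map (Function.Embedding.subtype fun v => v ∈ A) ∈ C.faces := by
  simp [induce]

lemma card_induce_faces (C : SComplex V) (A : Finset V) :
    (C.induce A).faces.card = (C.faces.filter (fun G => G ⊆ A)).card := by
  refine Finset.card_bij (fun s _ => s.map (Function.Embedding.subtype fun v => v ∈ A))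
    ?_ ?_ ?_
  · intro s hs
    refine Finset.mem_filter.2 ⟨(C.mem_induce_faces A).1 hs, ?_⟩
    intro x hx
    exact (mem_map_subtypeEmb_iff.1 hx).choose
  · intro s1 h1 s2 h2 he
    exact Finset.map_injective _ he
  · intro G hG
    obtain ⟨hGf, hGA⟩ := Finset.mem_filter.1 hG
    refine ⟨Finset.univ.filter (fun v : {v // v ∈ A} => v.1 ∈ G), ?_, ?_⟩
    · rw [mem_induce_faces]
      have he : (Finset.univ.filter (fun v : {v // v ∈ A} => v.1 ∈ G)).map
          (Function.Embedding.subtype fun v => v ∈ A) = G := by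
        ext x
        rw [mem_map_subtypeEmb_iff]
        simp only [Finset.mem_filter, Finset.mem_univ, true_and]
        exact ⟨fun ⟨_, h⟩ => h, fun h => ⟨hGA h, h⟩⟩
      rw [he]
      exact hGf
    · ext x
      rw [mem_map_subtypeEmb_iff]
      simp only [Finset.mem_filter, Finset.mem_univ, true_and]
      exact ⟨fun ⟨_, h⟩ => h, fun h => ⟨hGA h, h⟩⟩

lemma induce_facet_inter (C : SComplex V) (A : Finset V) {F' : Finset {v // v ∈ A}}
    (hF' : F' ∈ (C.induce A).facets) {F : Finset V}
    (hF : F ∈ C.faces) (hGF : F'.map (Function.Embedding.subtype fun v => v ∈ A) ⊆ F) :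
    F ∩ A = F'.map (Function.Embedding.subtype fun v => v ∈ A) := by
  set emb := Function.Embedding.subtype fun v : V => v ∈ A
  set t : Finset {v // v ∈ A} := Finset.univ.filter (fun v => v.1 ∈ F) with ht
  have htmap : t.map emb = F ∩ A := by
    ext x
    rw [mem_map_subtypeEmb_iff]
    simp only [ht, Finset.mem_filter, Finset.mem_univ, true_and, Finset.mem_inter]
    exact ⟨fun ⟨h1, h2⟩ => ⟨h2, h1⟩, fun ⟨h1, h2⟩ => ⟨h2, h1⟩⟩
  have htface : t ∈ (C.induce A).faces := by
    rw [mem_induce_faces, htmap]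
    exact C.down_closed _ hF _ Finset.inter_subset_left
  have hF't : F' ⊆ t := by
    intro v hv
    simp only [ht, Finset.mem_filter, Finset.mem_univ, true_and]
    exact hGF (Finset.mem_map_of_mem emb hv)
  have := (((C.induce A).mem_facets_iff).1 hF').2 t htface hF't
  rw [← htmap, ← this]

/-- Extend a column tuple on `A` by zeros. -/
def extCol (A : Finset V) (c : {v // v ∈ A} → Fin 2) : V → Fin 2 :=
  fun v => if h : v ∈ A then c ⟨v, h⟩ else 0

lemma liftRow_faces (C : SComplex V) (A : Finset V) (r : DRow (C.induce A)) :
    r.1.1.map (Function.Embedding.subtype fun v => v ∈ A) ∈ C.faces :=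
  (C.mem_induce_faces A).1 (((C.induce A).mem_facets_iff).1 r.1.2).1

/-- Lift a row of the design matrix of the induced subcomplex to a row of the design
matrix of the whole complex. -/
noncomputable def liftRow (C : SComplex V) (A : Finset V) (r : DRow (C.induce A)) : DRow C :=
  ⟨C.facetAt (C.liftRow_faces A r), fun v =>
    if h : v.1 ∈ r.1.1.map (Function.Embedding.subtype fun v => v ∈ A) then
      r.2 ⟨⟨v.1, (mem_map_subtypeEmb_iff.1 h).choose⟩, (mem_map_subtypeEmb_iff.1 h).choose_spec⟩
    else 0⟩

lemma designMatrix_induce_eq (C : SComplex V) (A : Finset V) :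
    designMatrix (C.induce A) = (designMatrix C).submatrix (C.liftRow A) (extCol A) := by
  ext r i
  rw [Matrix.submatrix_apply, designMatrix_apply, designMatrix_apply]
  set emb := Function.Embedding.subtype fun v : V => v ∈ A
  have hint : (C.facetAt (C.liftRow_faces A r)).1 ∩ A = r.1.1.map emb :=
    C.induce_facet_inter A r.1.2 (C.facetAt_mem_faces _) (C.subset_facetAt _)
  refine if_congr ?_ rfl rfl
  constructor
  · intro h v
    show extCol A i v.1 = _
    simp only [liftRow]
    by_cases hm : v.1 ∈ r.1.1.map emb
    · rw [dif_pos hm]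
      have hA : v.1 ∈ A := (mem_map_subtypeEmb_iff.1 hm).choose
      have hw : (⟨v.1, hA⟩ : {v // v ∈ A}) ∈ r.1.1 := (mem_map_subtypeEmb_iff.1 hm).choose_spec
      have h2 := h ⟨⟨v.1, hA⟩, hw⟩
      rw [extCol, dif_pos hA]
      exact h2
    · rw [dif_neg hm]
      rw [extCol]
      have hA : v.1 ∉ A := by
        intro hA
        exact hm (hint ▸ Finset.mem_inter.2 ⟨v.2, hA⟩)
      rw [dif_neg hA]
  · intro h w
    have hxm : (w.1 : {v // v ∈ A}).1 ∈ r.1.1.map emb := Finset.mem_map_of_mem emb w.2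
    have hxF : w.1.1 ∈ (C.facetAt (C.liftRow_faces A r)).1 := by
      have : w.1.1 ∈ (C.facetAt (C.liftRow_faces A r)).1 ∩ A := by rw [hint]; exact hxm
      exact (Finset.mem_inter.1 this).1
    have h2 := h ⟨w.1.1, hxF⟩
    simp only [liftRow] at h2
    rw [dif_pos hxm] at h2
    have he1 : (⟨⟨w.1.1, (mem_map_subtypeEmb_iff.1 hxm).choose⟩,
        (mem_map_subtypeEmb_iff.1 hxm).choose_spec⟩ : {v // v ∈ r.1.1}) = w :=
      Subtype.ext (Subtype.ext rfl)
    rw [he1] at h2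
    rw [← h2, extCol, dif_pos w.1.2]

lemma designMatrix_rowAt_extCol (C : SComplex V) (A : Finset V) {G : Finset V}
    (hG : G ∈ C.faces) (hGA : ¬ G ⊆ A) (c : {v // v ∈ A} → Fin 2) :
    designMatrix C (C.rowAt hG) (extCol A c) = 0 := by
  rw [designMatrix_apply, if_neg]
  intro hall
  obtain ⟨x, hxG, hxA⟩ := Finset.not_subset.1 hGA
  have h2 := hall ⟨x, C.subset_facetAt hG hxG⟩
  simp only [rowAt, extCol] at h2
  rw [if_pos hxG, dif_neg hxA] at h2
  exact absurd h2 (by decide)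

end SComplex

open SComplex in
set_option maxHeartbeats 1000000 in
/-- Every induced subcomplex of a unimodular simplicial complex is unimodular. -/
theorem induce_isUnimodular {V : Type} [DecidableEq V] [Fintype V]
    (C : SComplex V) (hC : C.IsUnimodular) (A : Finset V) :
    (C.induce A).IsUnimodular := by
  classical
  obtain ⟨lam, hlam0, hlam⟩ := hC
  have hMrank : intRank (C.designMatrix) = C.faces.card := C.intRank_designMatrix
  have hcard1 : Fintype.card {G // G ∈ C.faces} = intRank (C.designMatrix) := by
    rw [hMrank, Fintype.card_coe]
  let e1 : Fin (intRank (C.designMatrix)) ≃ {G // G ∈ C.faces} :=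
    (Fintype.equivFinOfCardEq hcard1).symm
  have hdetE : ((C.designMatrix).submatrix (fun G : {G // G ∈ C.faces} => C.rowAt G.2)
      (fun G : {G // G ∈ C.faces} => colAt G.1)).det = 1 :=
    det_subsetTriangular _
      (fun g g' h => designMatrix_rowAt_colAt_ne g.2 h)
      (fun g => designMatrix_rowAt_colAt_self g.2)
  have hdet1 := hlam ((fun G : {G // G ∈ C.faces} => C.rowAt G.2) ∘ e1)
      ((fun G : {G // G ∈ C.faces} => colAt G.1) ∘ e1)
  rw [← Matrix.submatrix_submatrix, Matrix.det_submatrix_equiv_self, hdetE] at hdet1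
  have hlam1 : lam = 1 ∨ lam = -1 := by
    rcases hdet1 with h | h | h
    · exact absurd h one_ne_zero
    · exact Or.inl h.symm
    · exact Or.inr (by omega)
  have hminor : ∀ (rr : Fin (intRank C.designMatrix) → DRow C)
      (cc : Fin (intRank C.designMatrix) → (V → Fin 2)),
      ((C.designMatrix).submatrix rr cc).det = 0 ∨
      ((C.designMatrix).submatrix rr cc).det = 1 ∨
      ((C.designMatrix).submatrix rr cc).det = -1 := by
    intro rr cc
    rcases hlam rr cc with h | h | h <;> rcases hlam1 with h1 | h1 <;> omega
  unfold IsUnimodular IntUnimodular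
  refine ⟨1, one_ne_zero, ?_⟩
  intro r c
  set B := C.faces.filter (fun G => ¬ G ⊆ A) with hB
  have hBmem : ∀ G : {G // G ∈ B}, G.1 ∈ C.faces := fun G => (Finset.mem_filter.1 G.2).1
  have hBnsub : ∀ G : {G // G ∈ B}, ¬ G.1 ⊆ A := fun G => (Finset.mem_filter.1 G.2).2
  have hNrank : intRank ((C.induce A).designMatrix) = (C.induce A).faces.card :=
    intRank_designMatrix _
  have hcards : intRank ((C.induce A).designMatrix) + B.card = intRank (C.designMatrix) := by
    rw [hNrank, hMrank, C.card_induce_faces A, hB]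
    exact Finset.card_filter_add_card_filter_not (fun G => G ⊆ A)
  have hce : Fintype.card (Fin (intRank ((C.induce A).designMatrix)) ⊕ {G // G ∈ B})
      = intRank (C.designMatrix) := by
    rw [Fintype.card_sum, Fintype.card_fin, Fintype.card_coe]
    exact hcards
  let e : Fin (intRank (C.designMatrix)) ≃
      (Fin (intRank ((C.induce A).designMatrix)) ⊕ {G // G ∈ B}) :=
    (Fintype.equivFinOfCardEq hce).symm
  let Rbig : (Fin (intRank ((C.induce A).designMatrix)) ⊕ {G // G ∈ B}) → DRow C :=
    Sum.elim (C.liftRow A ∘ r) (fun G => C.rowAt (hBmem G))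
  let Cbig : (Fin (intRank ((C.induce A).designMatrix)) ⊕ {G // G ∈ B}) → (V → Fin 2) :=
    Sum.elim (extCol A ∘ c) (fun G : {G // G ∈ B} => colAt G.1)
  have hblock : (C.designMatrix).submatrix Rbig Cbig = Matrix.fromBlocks
      ((C.designMatrix).submatrix (C.liftRow A ∘ r) (extCol A ∘ c))
      ((C.designMatrix).submatrix (C.liftRow A ∘ r) (fun G : {G // G ∈ B} => colAt G.1))
      0
      ((C.designMatrix).submatrix (fun G : {G // G ∈ B} => C.rowAt (hBmem G))
        (fun G : {G // G ∈ B} => colAt G.1)) := by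
    ext i j
    rcases i with i | i <;> rcases j with j | j
    · rfl
    · rfl
    · simp only [Matrix.submatrix_apply, Matrix.fromBlocks_apply₂₁, Matrix.zero_apply,
        Sum.elim_inr, Sum.elim_inl, Rbig, Cbig, Function.comp_apply]
      exact C.designMatrix_rowAt_extCol A (hBmem i) (hBnsub i) (c j)
    · rfl
  have hD22 : ((C.designMatrix).submatrix (fun G : {G // G ∈ B} => C.rowAt (hBmem G))
      (fun G : {G // G ∈ B} => colAt G.1)).det = 1 :=
    det_subsetTriangular _ (fun g g' h => designMatrix_rowAt_colAt_ne (hBmem g) h)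
      (fun g => designMatrix_rowAt_colAt_self (hBmem g))
  have hdetD : ((C.designMatrix).submatrix Rbig Cbig).det
      = (((C.induce A).designMatrix).submatrix r c).det := by
    rw [hblock, Matrix.det_fromBlocks_zero₂₁, hD22, mul_one]
    have htl : ((C.induce A).designMatrix).submatrix r c
        = ((C.designMatrix).submatrix (C.liftRow A) (extCol A)).submatrix r c :=
      congrArg (fun M => M.submatrix r c) (C.designMatrix_induce_eq A)
    rw [Matrix.submatrix_submatrix] at htl
    rw [htl]
  have hm := hminor (Rbig ∘ e) (Cbig ∘ e)
  rw [← Matrix.submatrix_submatrix, Matrix.det_submatrix_equiv_self, hdetD] at hm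
  simpa using hm
end

section
/- Let C be a unimodular simplicial complex on ground set [n]. Then for every face S of C, the link link_S(C) is unimodular. -/
open Finset

namespace LinkAux

open Submodule Module

variable {α : Type} [Fintype α] [DecidableEq α]

/-- indicator monomial function on the binary cube -/
def mon (T : Finset α) : (α → Fin 2) → ℚ := fun i => if ∀ v ∈ T, i v = 1 then 1 else 0

lemma prod_indicator (T : Finset α) (P : α → Prop) [DecidablePred P] :
    (∏ w ∈ T, if P w then (1:ℚ) else 0) = if ∀ w ∈ T, P w then 1 else 0 := by
  by_cases h : ∀ w ∈ T, P w
  · rw [if_pos h, Finset.prod_eq_one]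
    intro v hv; rw [if_pos (h v hv)]
  · rw [if_neg h]
    push_neg at h
    obtain ⟨v, hv, hnp⟩ := h
    exact Finset.prod_eq_zero hv (by rw [if_neg hnp])

lemma mon_apply_indicator (T : Finset α) (i : α → Fin 2) :
    mon T i = ∏ v ∈ T, (if i v = 1 then (1:ℚ) else 0) := by
  unfold mon
  by_cases h : ∀ v ∈ T, i v = 1
  · rw [if_pos h, Finset.prod_eq_one]
    intro v hv; rw [if_pos (h v hv)]
  · rw [if_neg h]
    push_neg at h
    obtain ⟨v, hv, hnp⟩ := h
    exact (Finset.prod_eq_zero hv (by rw [if_neg hnp])).symm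

lemma mon_union (T W : Finset α) (i : α → Fin 2) :
    mon (T ∪ W) i = mon T i * mon W i := by
  unfold mon
  rw [if_congr Finset.forall_mem_union rfl rfl]
  by_cases hT : ∀ v ∈ T, i v = 1
  · by_cases hW : ∀ v ∈ W, i v = 1
    · rw [if_pos ⟨hT, hW⟩, if_pos hT, if_pos hW, mul_one]
    · rw [if_neg (by tauto), if_neg hW, mul_zero]
  · rw [if_neg (by tauto), if_neg hT, zero_mul]

lemma mon_linearIndependent : LinearIndependent ℚ (mon (α := α)) := by
  rw [Fintype.linearIndependent_iff]
  intro g hg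
  by_contra hne
  push_neg at hne
  obtain ⟨T1, hT1⟩ := hne
  have hsup : (Finset.univ.filter fun T : Finset α => g T ≠ 0).Nonempty :=
    ⟨T1, by simp [hT1]⟩
  obtain ⟨T₀, hT₀, hmin⟩ := Finset.exists_min_image _ (fun T => T.card) hsup
  simp only [Finset.mem_filter] at hT₀
  have h0 := congrFun hg (fun v => if v ∈ T₀ then 1 else 0)
  simp only [Finset.sum_apply, Pi.smul_apply, smul_eq_mul, Pi.zero_apply] at h0
  have hmon : ∀ T : Finset α,
      mon T (fun v => if v ∈ T₀ then (1 : Fin 2) else 0) = if T ⊆ T₀ then 1 else 0 := by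
    intro T
    unfold mon
    refine if_congr ?_ rfl rfl
    constructor
    · intro h v hv
      have := h v hv
      by_cases hv0 : v ∈ T₀
      · exact hv0
      · simp only [if_neg hv0] at this
        exact absurd this (by decide)
    · intro h v hv
      simp only [if_pos (h hv)]
  have hsum : (∑ T : Finset α, g T * mon T (fun v => if v ∈ T₀ then 1 else 0)) = g T₀ := by
    rw [Finset.sum_eq_single_of_mem T₀ (Finset.mem_univ _)]
    · rw [hmon, if_pos (Finset.Subset.refl _), mul_one]
    · intro T _ hne
      rw [hmon]
      by_cases hsub : T ⊆ T₀
      · have hcard : T.card < T₀.card := Finset.card_lt_card (ssubset_of_ne_of_subset hne hsub)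
        have : g T = 0 := by
          by_contra hgT
          exact absurd (hmin T (Finset.mem_filter.mpr ⟨Finset.mem_univ _, hgT⟩)) (by omega)
        rw [this, zero_mul]
      · rw [if_neg hsub, mul_zero]
  rw [hsum] at h0
  exact hT₀.2 h0

/-- the rows of the (rationalized) design matrix -/
def rowFun (D : SComplex α) (r : (F : {F // F ∈ D.facets}) × ((v : {v // v ∈ F.1}) → Fin 2)) :
    (α → Fin 2) → ℚ := fun i => ((D.designMatrix r i : ℤ) : ℚ)

lemma rowFun_eq_row (D : SComplex α) (r) :
    rowFun D r = (D.designMatrix.map ((↑·) : ℤ → ℚ)) r := rfl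

lemma rowFun_apply (D : SComplex α) (r) (i : α → Fin 2) :
    rowFun D r i = if (∀ v : {v // v ∈ r.1.1}, i v.1 = r.2 v) then 1 else 0 := by
  unfold rowFun SComplex.designMatrix SComplex.designMatrixD
  split <;> simp

lemma facet_mem_faces (D : SComplex α) {F : Finset α} (hF : F ∈ D.facets) : F ∈ D.faces :=
  by simp only [SComplex.facets, Finset.mem_filter] at hF; exact hF.1

lemma rowFun_mem_span_mon (D : SComplex α) (r) :
    rowFun D r ∈ span ℚ (mon '' {T : Finset α | T ∈ D.faces}) := by
  obtain ⟨⟨F, hF⟩, j⟩ := r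
  have hface : F ∈ D.faces := facet_mem_faces D hF
  have key : rowFun D ⟨⟨F, hF⟩, j⟩ = ∑ t ∈ F.attach.powerset,
      ((∏ v ∈ t, (if j v = 1 then (1:ℚ) else (-1))) *
        ∏ v ∈ F.attach \ t, (if j v = 1 then (0:ℚ) else 1)) • mon (t.image Subtype.val) := by
    funext i
    rw [rowFun_apply]
    simp only [Finset.sum_apply, Pi.smul_apply, smul_eq_mul]
    have h1 : (if (∀ v : {v // v ∈ F}, i v.1 = j v) then (1:ℚ) else 0)
        = ∏ v ∈ F.attach, (if i v.1 = j v then (1:ℚ) else 0) := by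
      rw [prod_indicator]
      refine (if_congr ?_ rfl rfl).symm
      simp [Finset.mem_attach]
    have h2 : ∀ v : {v // v ∈ F}, (if i v.1 = j v then (1:ℚ) else 0)
        = (if j v = 1 then (1:ℚ) else (-1)) * (if i v.1 = 1 then (1:ℚ) else 0)
          + (if j v = 1 then (0:ℚ) else 1) := by
      intro v
      have hj : j v = 0 ∨ j v = 1 := by omega
      have hi : i v.1 = 0 ∨ i v.1 = 1 := by omega
      rcases hj with hj | hj <;> rcases hi with hi | hi <;>
        rw [hj, hi] <;> norm_num
    rw [h1, Finset.prod_congr rfl (fun v _ => h2 v), Finset.prod_add]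
    refine Finset.sum_congr rfl fun t _ => ?_
    rw [Finset.prod_mul_distrib]
    have h3 : mon (t.image Subtype.val) i = ∏ v ∈ t, (if i v.1 = 1 then (1:ℚ) else 0) := by
      rw [mon_apply_indicator, Finset.prod_image]
      intro x _ y _ hxy
      exact Subtype.coe_injective hxy
    rw [h3]; ring
  rw [key]
  refine Submodule.sum_mem _ fun t _ => Submodule.smul_mem _ _ (Submodule.subset_span ?_)
  refine ⟨t.image Subtype.val, ?_, rfl⟩
  refine D.down_closed F hface _ ?_
  intro x hx
  obtain ⟨v, _, rfl⟩ := Finset.mem_image.mp hx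
  exact v.2

lemma exists_facet (D : SComplex α) {T : Finset α} (hT : T ∈ D.faces) :
    ∃ F, ∃ hF : F ∈ D.facets, T ⊆ F := by
  obtain ⟨F, hF, hmax⟩ := Finset.exists_max_image (D.faces.filter fun F => T ⊆ F)
    (fun F => F.card) ⟨T, by simp [hT]⟩
  simp only [Finset.mem_filter] at hF
  refine ⟨F, ?_, hF.2⟩
  simp only [SComplex.facets, Finset.mem_filter]
  refine ⟨hF.1, fun G hG hFG => Finset.eq_of_subset_of_card_le hFG ?_⟩
  exact hmax G (Finset.mem_filter.mpr ⟨hG, hF.2.trans hFG⟩)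

lemma mon_mem_span_rows (D : SComplex α) {T : Finset α} (hT : T ∈ D.faces) :
    mon T ∈ span ℚ (Set.range (rowFun D)) := by
  obtain ⟨F, hF, hTF⟩ := exists_facet D hT
  have key : mon T = ∑ j ∈ (Finset.univ.filter fun j : {v // v ∈ F} → Fin 2 =>
      ∀ v : {v // v ∈ F}, v.1 ∈ T → j v = 1), rowFun D ⟨⟨F, hF⟩, j⟩ := by
    funext i
    simp only [Finset.sum_apply]
    have h1 : ∀ j : {v // v ∈ F} → Fin 2, rowFun D ⟨⟨F, hF⟩, j⟩ i
        = if j = (fun v : {v // v ∈ F} => i v.1) then (1:ℚ) else 0 := by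
      intro j
      rw [rowFun_apply]
      refine if_congr ?_ rfl rfl
      constructor
      · intro h; funext v; exact (h v).symm
      · intro h v; rw [h]
    rw [Finset.sum_congr rfl fun j _ => h1 j, Finset.sum_ite_eq' _ (fun v : {v // v ∈ F} => i v.1)
      (fun _ => (1:ℚ))]
    simp only [Finset.mem_filter, Finset.mem_univ, true_and]
    unfold mon
    refine (if_congr ?_ rfl rfl).symm
    constructor
    · intro h v hv
      exact h ⟨v, hTF hv⟩ hv
    · intro h v hv
      exact h v.1 hv
  rw [key]
  exact Submodule.sum_mem _ fun j _ => Submodule.subset_span ⟨_, rfl⟩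

end LinkAux
namespace LinkAux

open Submodule Module Matrix

section MF

variable {m' n' : Type} [Fintype m'] [Fintype n'] [DecidableEq m'] [DecidableEq n']

lemma exists_indep_cols (Q : Matrix m' n' ℚ) (k : ℕ) (hk : k ≤ Q.rank) :
    ∃ c : Fin k → n', LinearIndependent ℚ (fun j => Qᵀ (c j)) := by
  classical
  obtain ⟨b, hbsub, hbspan, hbind⟩ := exists_linearIndependent ℚ (Set.range Qᵀ)
  have hfin : b.Finite := (Set.finite_range Qᵀ).subset hbsub
  haveI : Fintype b := hfin.fintype
  have hcard : k ≤ Fintype.card b := by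
    have h1 : Q.rank = finrank ℚ (span ℚ (Set.range Qᵀ)) := Q.rank_eq_finrank_span_cols
    have h2 : finrank ℚ (span ℚ b) = b.toFinset.card := finrank_span_set_eq_card hbind
    rw [← Set.toFinset_card, ← h2, hbspan, ← h1]
    exact hk
  let e := (Fintype.equivFin b).symm
  have hinj : Function.Injective (fun x : Fin k => e (Fin.castLE hcard x)) :=
    e.injective.comp (Fin.castLE_injective hcard)
  have hind2 : LinearIndependent ℚ (fun x : Fin k => ((e (Fin.castLE hcard x)) : m' → ℚ)) :=
    hbind.comp _ hinj
  choose c hc using fun x : Fin k => hbsub (e (Fin.castLE hcard x)).2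
  refine ⟨c, ?_⟩
  have heq : (fun j => Qᵀ (c j)) = fun x : Fin k => ((e (Fin.castLE hcard x)) : m' → ℚ) :=
    funext hc
  rw [heq]
  exact hind2

lemma exists_det_ne_zero (Q : Matrix m' n' ℚ) :
    ∃ (r : Fin Q.rank → m') (c : Fin Q.rank → n'), (Q.submatrix r c).det ≠ 0 := by
  obtain ⟨c, hc⟩ := exists_indep_cols Q Q.rank le_rfl
  have ha : (Q.submatrix id c).rank = Q.rank := by
    rw [Matrix.rank_eq_finrank_span_cols]
    have hr : Set.range (Q.submatrix id c).col = Set.range (fun j => Qᵀ (c j)) := rfl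
    rw [hr, finrank_span_eq_card hc, Fintype.card_fin]
  have h2 : Q.rank ≤ (Q.submatrix id c)ᵀ.rank :=
    le_of_eq (ha.symm.trans (Matrix.rank_transpose _).symm)
  obtain ⟨r, hr⟩ := exists_indep_cols (Q.submatrix id c)ᵀ Q.rank h2
  refine ⟨r, c, ?_⟩
  have hrows : LinearIndependent ℚ (fun l => Q.submatrix r c l) := hr
  intro hdet
  have hunit : IsUnit (Q.submatrix r c) := Matrix.linearIndependent_rows_iff_isUnit.mp hrows
  have hud := (Matrix.isUnit_iff_isUnit_det _).mp hunit
  rw [hdet] at hud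
  simpa using hud

end MF

section Expand

variable {α : Type} [Fintype α] [DecidableEq α]

lemma sum_powerset_neg_one_pow_card_Q (S₁ : Finset α) :
    (∑ W ∈ S₁.powerset, (-1:ℚ) ^ W.card) = if S₁ = ∅ then 1 else 0 := by
  have h1 := Finset.sum_powerset_neg_one_pow_card (x := S₁)
  have h2 : ((∑ W ∈ S₁.powerset, (-1:ℤ) ^ W.card : ℤ) : ℚ)
      = ∑ W ∈ S₁.powerset, (-1:ℚ) ^ W.card := by
    push_cast
    rfl
  rw [← h2, h1]
  split <;> norm_num

lemma indicator_S_expand (S : Finset α) (i : α → Fin 2) :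
    (if ∀ v ∈ S, i v = 0 then (1:ℚ) else 0)
      = ∑ W ∈ S.powerset, (-1:ℚ) ^ W.card * mon W i := by
  have h1 : ∀ W ∈ S.powerset, (-1:ℚ) ^ W.card * mon W i
      = if W ⊆ S.filter (fun v => i v = 1) then (-1:ℚ) ^ W.card else 0 := by
    intro W hW
    rw [Finset.mem_powerset] at hW
    unfold mon
    by_cases h : W ⊆ S.filter (fun v => i v = 1)
    · rw [if_pos h, if_pos, mul_one]
      intro v hv
      exact (Finset.mem_filter.mp (h hv)).2
    · rw [if_neg h, if_neg, mul_zero]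
      intro hall
      exact h fun v hv => Finset.mem_filter.mpr ⟨hW hv, hall v hv⟩
  rw [Finset.sum_congr rfl h1, ← Finset.sum_filter]
  have h3 : S.powerset.filter (fun W => W ⊆ S.filter (fun v => i v = 1))
      = (S.filter (fun v => i v = 1)).powerset := by
    ext W
    simp only [Finset.mem_filter, Finset.mem_powerset]
    constructor
    · exact fun h => h.2
    · intro h
      exact ⟨h.trans (Finset.filter_subset _ _), h⟩
  rw [h3, sum_powerset_neg_one_pow_card_Q]
  refine (if_congr ?_ rfl rfl).symm
  rw [Finset.filter_eq_empty_iff]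
  have hf2 : ∀ x : Fin 2, (¬ x = 1) ↔ x = 0 := by decide
  constructor
  · intro h v hv
    exact (hf2 _).mp (h hv)
  · intro h v hv
    exact (hf2 _).mpr (h v hv)

lemma mon_mul_expand (S T : Finset α) (i : α → Fin 2) :
    (if ∀ v ∈ S, i v = 0 then (1:ℚ) else 0) * mon T i
      = ∑ W ∈ S.powerset, (-1:ℚ) ^ W.card * mon (T ∪ W) i := by
  rw [indicator_S_expand, Finset.sum_mul]
  refine Finset.sum_congr rfl fun W _ => ?_
  rw [mon_union]
  ring

lemma indicator_mul_mon_eq_zero (S T : Finset α) (i : α → Fin 2) (h : ¬ (T ∩ S = ∅)) :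
    (if ∀ v ∈ S, i v = 0 then (1:ℚ) else 0) * mon T i = 0 := by
  obtain ⟨v, hv⟩ := Finset.nonempty_iff_ne_empty.mpr h
  rw [Finset.mem_inter] at hv
  by_cases h0 : ∀ v ∈ S, i v = 0
  · by_cases h1 : ∀ w ∈ T, i w = 1
    · exact absurd (h1 v hv.1) (by rw [h0 v hv.2]; decide)
    · unfold mon
      rw [if_neg h1, mul_zero]
  · rw [if_neg h0, zero_mul]

lemma coeff_identity (S : Finset α) (γ : Finset α → ℚ)
    (hvan : ∀ i : α → Fin 2, (¬ ∀ v ∈ S, i v = 0) → (∑ T : Finset α, γ T * mon T i) = 0) :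
    ∀ M : Finset α, γ M = (-1:ℚ) ^ (M ∩ S).card * γ (M \ S) := by
  have hfun : ∀ i, (∑ T : Finset α, γ T * mon T i)
      = ∑ M : Finset α, ((-1:ℚ) ^ (M ∩ S).card * γ (M \ S)) * mon M i := by
    intro i
    have step1 : (∑ T : Finset α, γ T * mon T i)
        = ∑ T : Finset α, γ T * ((if ∀ v ∈ S, i v = 0 then (1:ℚ) else 0) * mon T i) := by
      by_cases h : ∀ v ∈ S, i v = 0
      · refine Finset.sum_congr rfl fun T _ => ?_
        rw [if_pos h, one_mul]
      · rw [hvan i h]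
        symm
        refine Finset.sum_eq_zero fun T _ => ?_
        rw [if_neg h, zero_mul, mul_zero]
    rw [step1]
    rw [← Finset.sum_filter_add_sum_filter_not Finset.univ (fun T => T ∩ S = ∅)]
    have hz : (∑ T ∈ Finset.univ.filter (fun T : Finset α => ¬ T ∩ S = ∅),
        γ T * ((if ∀ v ∈ S, i v = 0 then (1:ℚ) else 0) * mon T i)) = 0 := by
      refine Finset.sum_eq_zero fun T hT => ?_
      rw [indicator_mul_mon_eq_zero S T i (Finset.mem_filter.mp hT).2, mul_zero]
    rw [hz, add_zero]
    have hexp : ∀ T, γ T * ((if ∀ v ∈ S, i v = 0 then (1:ℚ) else 0) * mon T i)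
        = ∑ W ∈ S.powerset, γ T * ((-1:ℚ) ^ W.card * mon (T ∪ W) i) := by
      intro T
      rw [mon_mul_expand, Finset.mul_sum]
    rw [Finset.sum_congr rfl fun T _ => hexp T]
    rw [← Finset.sum_product']
    refine Finset.sum_nbij' (fun p => p.1 ∪ p.2) (fun M => (M \ S, M ∩ S)) ?_ ?_ ?_ ?_ ?_
    · intro p _
      exact Finset.mem_univ _
    · intro M _
      rw [Finset.mem_product, Finset.mem_filter, Finset.mem_powerset]
      refine ⟨⟨Finset.mem_univ _, ?_⟩, Finset.inter_subset_right⟩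
      rw [Finset.sdiff_inter_self]
    · intro p hp
      rw [Finset.mem_product, Finset.mem_filter, Finset.mem_powerset] at hp
      obtain ⟨⟨-, hTS⟩, hWS⟩ := hp
      have hTnS : ∀ v ∈ p.1, v ∉ S := by
        intro v hv hvS
        exact (Finset.eq_empty_iff_forall_notMem.mp hTS v)
          (Finset.mem_inter.mpr ⟨hv, hvS⟩)
      have hfst : (p.1 ∪ p.2) \ S = p.1 := by
        ext v
        simp only [Finset.mem_sdiff, Finset.mem_union]
        constructor
        · rintro ⟨h | h, hns⟩
          · exact h
          · exact absurd (hWS h) hns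
        · intro h
          exact ⟨Or.inl h, hTnS v h⟩
      have hsnd : (p.1 ∪ p.2) ∩ S = p.2 := by
        ext v
        simp only [Finset.mem_inter, Finset.mem_union]
        constructor
        · rintro ⟨h | h, hs⟩
          · exact absurd hs (hTnS v h)
          · exact h
        · intro h
          exact ⟨Or.inr h, hWS h⟩
      simp only [hfst, hsnd, Prod.mk.eta]
    · intro M _
      exact Finset.sdiff_union_inter M S
    · intro p hp
      rw [Finset.mem_product, Finset.mem_filter, Finset.mem_powerset] at hp
      obtain ⟨⟨-, hTS⟩, hWS⟩ := hp
      have hTnS : ∀ v ∈ p.1, v ∉ S := by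
        intro v hv hvS
        exact (Finset.eq_empty_iff_forall_notMem.mp hTS v)
          (Finset.mem_inter.mpr ⟨hv, hvS⟩)
      have hfst : (p.1 ∪ p.2) \ S = p.1 := by
        ext v
        simp only [Finset.mem_sdiff, Finset.mem_union]
        constructor
        · rintro ⟨h | h, hns⟩
          · exact h
          · exact absurd (hWS h) hns
        · intro h
          exact ⟨Or.inl h, hTnS v h⟩
      have hsnd : (p.1 ∪ p.2) ∩ S = p.2 := by
        ext v
        simp only [Finset.mem_inter, Finset.mem_union]
        constructor
        · rintro ⟨h | h, hs⟩
          · exact absurd hs (hTnS v h)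
          · exact h
        · intro h
          exact ⟨Or.inr h, hWS h⟩
      simp only [hfst, hsnd]
      ring
  have hsum0 : (∑ M : Finset α, (γ M - (-1:ℚ) ^ (M ∩ S).card * γ (M \ S)) • mon M)
      = (0 : (α → Fin 2) → ℚ) := by
    funext i
    simp only [Finset.sum_apply, Pi.smul_apply, smul_eq_mul, Pi.zero_apply, sub_mul]
    rw [Finset.sum_sub_distrib, hfun i, sub_self]
  have hind := Fintype.linearIndependent_iff.mp (mon_linearIndependent (α := α))
    (fun M => γ M - (-1:ℚ) ^ (M ∩ S).card * γ (M \ S)) hsum0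
  intro M
  have hM := hind M
  simp only [sub_eq_zero] at hM
  exact hM

end Expand

end LinkAux
namespace LinkAux

open Submodule Module Matrix

section Link

variable {n : ℕ}

/-- extension of a tuple on `Sᶜ` by zeros on `S` -/
def emap (S : Finset (Fin n)) (i' : {v // v ∈ Sᶜ} → Fin 2) : Fin n → Fin 2 :=
  fun v => if h : v ∈ Sᶜ then i' ⟨v, h⟩ else 0

lemma emap_restrict (S : Finset (Fin n)) (i : Fin n → Fin 2) (h : ∀ v ∈ S, i v = 0) :
    emap S (fun w : {v // v ∈ Sᶜ} => i w.1) = i := by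
  funext v
  unfold emap
  by_cases hv : v ∈ Sᶜ
  · rw [dif_pos hv]
  · rw [dif_neg hv]
    rw [Finset.mem_compl, not_not] at hv
    exact (h v hv).symm

lemma link_facet_union (C : SComplex (Fin n)) (S : Finset (Fin n))
    {G : Finset {v // v ∈ Sᶜ}} (hG : G ∈ (C.link S).facets) :
    G.map (Function.Embedding.subtype fun v => v ∈ Sᶜ) ∪ S ∈ C.facets := by
  simp only [SComplex.facets, Finset.mem_filter] at hG ⊢
  obtain ⟨hGf, hGmax⟩ := hG
  have hGC : G.map (Function.Embedding.subtype fun v => v ∈ Sᶜ) ∪ S ∈ C.faces := by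
    have h := hGf
    simp only [SComplex.link, Finset.mem_filter, Finset.mem_univ, true_and] at h
    exact h
  refine ⟨hGC, fun H hH hsub => ?_⟩
  have hSH : S ⊆ H := (Finset.union_subset_iff.mp hsub).2
  have hmapH : G.map (Function.Embedding.subtype fun v => v ∈ Sᶜ) ⊆ H :=
    (Finset.union_subset_iff.mp hsub).1
  have hG₂map : (H.subtype (fun v => v ∈ Sᶜ)).map (Function.Embedding.subtype fun v => v ∈ Sᶜ)
      = H.filter (fun v => v ∈ Sᶜ) := Finset.subtype_map _
  have hfil : H.filter (fun v => v ∈ Sᶜ) ∪ S = H := by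
    ext v
    simp only [Finset.mem_union, Finset.mem_filter, Finset.mem_compl]
    constructor
    · rintro (⟨h, -⟩ | h)
      · exact h
      · exact hSH h
    · intro h
      by_cases hv : v ∈ S
      · exact Or.inr hv
      · exact Or.inl ⟨h, hv⟩
  have hG₂f : H.subtype (fun v => v ∈ Sᶜ) ∈ (C.link S).faces := by
    simp only [SComplex.link, Finset.mem_filter, Finset.mem_univ, true_and]
    rw [hG₂map, hfil]
    exact hH
  have hGG₂ : G ⊆ H.subtype (fun v => v ∈ Sᶜ) := by
    intro v hv
    rw [Finset.mem_subtype]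
    refine hmapH ?_
    rw [Finset.mem_map]
    exact ⟨v, hv, rfl⟩
  have hGeq : G = H.subtype (fun v => v ∈ Sᶜ) := hGmax _ hG₂f hGG₂
  rw [hGeq, hG₂map, hfil]

/-- the row of the big design matrix corresponding to a row of the link design matrix -/
def rhoRow (C : SComplex (Fin n)) (S : Finset (Fin n))
    (x : (G : {G // G ∈ (C.link S).facets}) × ((v : {v // v ∈ G.1}) → Fin 2)) :
    (F : {F // F ∈ C.facets}) × ((v : {v // v ∈ F.1}) → Fin 2) :=
  ⟨⟨x.1.1.map (Function.Embedding.subtype fun v => v ∈ Sᶜ) ∪ S,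
      link_facet_union C S x.1.2⟩,
    fun v => if h : v.1 ∈ Sᶜ then
        (if h2 : (⟨v.1, h⟩ : {v // v ∈ Sᶜ}) ∈ x.1.1 then x.2 ⟨⟨v.1, h⟩, h2⟩ else 0)
      else 0⟩

lemma rho_row_emap (C : SComplex (Fin n)) (S : Finset (Fin n))
    (x : (G : {G // G ∈ (C.link S).facets}) × ((v : {v // v ∈ G.1}) → Fin 2))
    (i' : {v // v ∈ Sᶜ} → Fin 2) :
    C.designMatrix (rhoRow C S x) (emap S i') = (C.link S).designMatrix x i' := by
  unfold SComplex.designMatrix SComplex.designMatrixD rhoRow emap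
  dsimp only
  refine if_congr ?_ rfl rfl
  constructor
  · intro h w
    rcases w with ⟨⟨u, hu⟩, hw⟩
    have hw1 : u ∈ x.1.1.map (Function.Embedding.subtype fun v => v ∈ Sᶜ) ∪ S :=
      Finset.mem_union_left _ (Finset.mem_map.mpr ⟨⟨u, hu⟩, hw, rfl⟩)
    have hv := h ⟨u, hw1⟩
    rw [dif_pos hu, dif_pos hu, dif_pos hw] at hv
    exact hv
  · intro h v
    rcases v with ⟨u, huF⟩
    by_cases hu : u ∈ Sᶜ
    · have huG : (⟨u, hu⟩ : {v // v ∈ Sᶜ}) ∈ x.1.1 := by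
        rcases Finset.mem_union.mp huF with hmap | hS
        · obtain ⟨w, hwG, hwu⟩ := Finset.mem_map.mp hmap
          have : w = ⟨u, hu⟩ := Subtype.ext hwu
          rw [← this]
          exact hwG
        · exact absurd hS (Finset.mem_compl.mp hu)
      rw [dif_pos hu, dif_pos hu, dif_pos huG]
      exact h ⟨⟨u, hu⟩, huG⟩
    · rw [dif_neg hu, dif_neg hu]

lemma rho_row_vanish (C : SComplex (Fin n)) (S : Finset (Fin n))
    (x : (G : {G // G ∈ (C.link S).facets}) × ((v : {v // v ∈ G.1}) → Fin 2))
    (i : Fin n → Fin 2) (hi : ¬ ∀ v ∈ S, i v = 0) :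
    C.designMatrix (rhoRow C S x) i = 0 := by
  unfold SComplex.designMatrix SComplex.designMatrixD rhoRow
  dsimp only
  rw [if_neg]
  intro hall
  push_neg at hi
  obtain ⟨v, hvS, hv⟩ := hi
  have hvF : v ∈ x.1.1.map (Function.Embedding.subtype fun v => v ∈ Sᶜ) ∪ S :=
    Finset.mem_union_right _ hvS
  have h := hall ⟨v, hvF⟩
  rw [dif_neg (fun hc => (Finset.mem_compl.mp hc) hvS)] at h
  exact hv h

lemma proj_mem (C : SComplex (Fin n)) (S : Finset (Fin n)) (f : (Fin n → Fin 2) → ℚ)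
    (hf : f ∈ span ℚ (mon '' {T : Finset (Fin n) | T ∈ C.faces}))
    (hker : ∀ i, (¬ ∀ v ∈ S, i v = 0) → f i = 0) :
    (fun i' => f (emap S i')) ∈ span ℚ (Set.range (rowFun (C.link S))) := by
  classical
  rw [Set.image_eq_range, mem_span_range_iff_exists_fun] at hf
  obtain ⟨c, hc⟩ := hf
  set γ : Finset (Fin n) → ℚ := fun T => if h : T ∈ C.faces then c ⟨T, h⟩ else 0 with hγdef
  have hγpos : ∀ (T : Finset (Fin n)) (h : T ∈ C.faces), γ T = c ⟨T, h⟩ := by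
    intro T h
    rw [hγdef]
    exact dif_pos h
  have hγneg : ∀ T : Finset (Fin n), T ∉ C.faces → γ T = 0 := by
    intro T h
    rw [hγdef]
    exact dif_neg h
  have hγf : (∑ T : Finset (Fin n), γ T • mon T) = f := by
    rw [← hc]
    have h2 : (∑ T : Finset (Fin n), γ T • mon T) = ∑ T ∈ C.faces, γ T • mon T := by
      symm
      refine Finset.sum_subset (Finset.subset_univ _) fun T _ hT => ?_
      rw [hγneg T hT, zero_smul]
    rw [h2, Finset.sum_subtype C.faces (fun T => Iff.rfl) (fun T => γ T • mon T)]
    refine Finset.sum_congr rfl fun x _ => ?_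
    rw [hγpos x.1 x.2, Subtype.coe_eta]
  have hvan : ∀ i, (¬ ∀ v ∈ S, i v = 0) → (∑ T : Finset (Fin n), γ T * mon T i) = 0 := by
    intro i hi
    have h := congrFun hγf i
    simp only [Finset.sum_apply, Pi.smul_apply, smul_eq_mul] at h
    rw [h]
    exact hker i hi
  have hid := coeff_identity S γ hvan
  have hsupp : ∀ T : Finset (Fin n), γ T ≠ 0 → T ∈ C.faces := by
    intro T h
    by_contra hn
    exact h (hγneg T hn)
  have hproj : (fun i' : {v // v ∈ Sᶜ} → Fin 2 => f (emap S i'))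
      = ∑ T : Finset (Fin n), γ T • (fun i' => mon T (emap S i')) := by
    funext i'
    conv_lhs => rw [← hγf]
    simp only [Finset.sum_apply, Pi.smul_apply, smul_eq_mul]
  rw [hproj]
  refine Submodule.sum_mem _ fun T _ => ?_
  by_cases hγT : γ T = 0
  · rw [hγT, zero_smul]
    exact Submodule.zero_mem _
  refine Submodule.smul_mem _ _ ?_
  by_cases hTS : T ∩ S = ∅
  · have hTnS : ∀ v ∈ T, v ∈ Sᶜ := fun v hv => Finset.mem_compl.mpr fun hvS =>
      (Finset.eq_empty_iff_forall_notMem.mp hTS v) (Finset.mem_inter.mpr ⟨hv, hvS⟩)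
    have hTunion : T ∪ S ∈ C.faces := by
      have h1 := hid (T ∪ S)
      have h2 : (T ∪ S) \ S = T := by
        ext v
        simp only [Finset.mem_sdiff, Finset.mem_union]
        constructor
        · rintro ⟨h | h, hns⟩
          · exact h
          · exact absurd h hns
        · intro h
          exact ⟨Or.inl h, Finset.mem_compl.mp (hTnS v h)⟩
      rw [h2] at h1
      have hne : γ (T ∪ S) ≠ 0 := by
        rw [h1]
        exact mul_ne_zero (pow_ne_zero _ (by norm_num)) hγT
      exact hsupp _ hne
    have hT'face : T.subtype (fun v => v ∈ Sᶜ) ∈ (C.link S).faces := by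
      simp only [SComplex.link, Finset.mem_filter, Finset.mem_univ, true_and]
      have hmapT : (T.subtype (fun v => v ∈ Sᶜ)).map
          (Function.Embedding.subtype fun v => v ∈ Sᶜ) = T := by
        rw [Finset.subtype_map]
        exact Finset.filter_true_of_mem hTnS
      rw [hmapT]
      exact hTunion
    have hmon : (fun i' => mon T (emap S i')) = mon (T.subtype (fun v => v ∈ Sᶜ)) := by
      funext i'
      unfold mon emap
      refine ite_congr (propext ?_) (fun _ => rfl) (fun _ => rfl)
      constructor
      · intro h w hw
        rw [Finset.mem_subtype] at hw
        have h2 := h w.1 hw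
        rw [dif_pos w.2] at h2
        exact h2
      · intro h v hv
        have hvc := hTnS v hv
        rw [dif_pos hvc]
        exact h ⟨v, hvc⟩ (by rw [Finset.mem_subtype]; exact hv)
    rw [hmon]
    exact mon_mem_span_rows (C.link S) hT'face
  · have hzero : (fun i' : {v // v ∈ Sᶜ} → Fin 2 => mon T (emap S i'))
        = (0 : ({v // v ∈ Sᶜ} → Fin 2) → ℚ) := by
      funext i'
      obtain ⟨v, hv⟩ := Finset.nonempty_iff_ne_empty.mpr hTS
      rw [Finset.mem_inter] at hv
      unfold mon emap
      rw [if_neg, Pi.zero_apply]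
      intro hall
      have h := hall v hv.1
      rw [dif_neg (fun hc => (Finset.mem_compl.mp hc) hv.2)] at h
      exact absurd h (by decide)
    rw [hzero]
    exact Submodule.zero_mem _

end Link

end LinkAux
namespace LinkAux

open Submodule Module Matrix

section Rank

variable {n : ℕ}

lemma cast_det {ι : Type} [Fintype ι] [DecidableEq ι] (M : Matrix ι ι ℤ) :
    (M.map ((↑·) : ℤ → ℚ)).det = (M.det : ℚ) :=
  (RingHom.map_det (Int.castRingHom ℚ) M).symm

lemma finrank_congr {M : Type} [AddCommGroup M] [Module ℚ M] {p q : Submodule ℚ M}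
    (h : p = q) : finrank ℚ p = finrank ℚ q := by rw [h]

lemma rank_chain (C : SComplex (Fin n)) (S : Finset (Fin n)) :
    ((C.designMatrix).map ((↑·) : ℤ → ℚ)).rank
      = (((C.link S).designMatrix).map ((↑·) : ℤ → ℚ)).rank
        + (((C.designMatrix).map ((↑·) : ℤ → ℚ)).submatrix id
            (Subtype.val : {i : Fin n → Fin 2 // ¬ ∀ v ∈ S, i v = 0} → (Fin n → Fin 2))).rank := by
  classical
  obtain ⟨Aq, hAqdef⟩ : ∃ X, X = (C.designMatrix).map ((↑·) : ℤ → ℚ) := ⟨_, rfl⟩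
  obtain ⟨Bq, hBqdef⟩ : ∃ X, X = ((C.link S).designMatrix).map ((↑·) : ℤ → ℚ) := ⟨_, rfl⟩
  rw [← hAqdef, ← hBqdef]
  obtain ⟨V, hVdef⟩ : ∃ X : Submodule ℚ ((Fin n → Fin 2) → ℚ), X = span ℚ (Set.range Aq) :=
    ⟨_, rfl⟩
  obtain ⟨P2, hP2def⟩ : ∃ X : ((Fin n → Fin 2) → ℚ) →ₗ[ℚ]
      ({i : Fin n → Fin 2 // ¬ ∀ v ∈ S, i v = 0} → ℚ), X = LinearMap.funLeft ℚ ℚ Subtype.val :=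
    ⟨_, rfl⟩
  obtain ⟨P1, hP1def⟩ : ∃ X : ((Fin n → Fin 2) → ℚ) →ₗ[ℚ] (({v // v ∈ Sᶜ} → Fin 2) → ℚ),
      X = LinearMap.funLeft ℚ ℚ (emap S) := ⟨_, rfl⟩
  have hA : Aq.rank = finrank ℚ V := by
    rw [hVdef]
    exact Matrix.rank_eq_finrank_span_row Aq
  have hReg : (Aq.submatrix id
      (Subtype.val : {i : Fin n → Fin 2 // ¬ ∀ v ∈ S, i v = 0} → (Fin n → Fin 2))).rank
      = finrank ℚ (V.map P2) := by
    rw [Matrix.rank_eq_finrank_span_row]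
    have h1 : Set.range (Aq.submatrix id
        (Subtype.val : {i : Fin n → Fin 2 // ¬ ∀ v ∈ S, i v = 0} → (Fin n → Fin 2))).row
        = P2 '' Set.range Aq := by
      rw [hP2def]
      exact Set.range_comp (⇑(LinearMap.funLeft ℚ ℚ
        (Subtype.val : {i : Fin n → Fin 2 // ¬ ∀ v ∈ S, i v = 0} → (Fin n → Fin 2)))) Aq
    rw [h1, ← Submodule.map_span, ← hVdef]
  have hrn : finrank ℚ V
      = finrank ℚ (V.map P2) + finrank ℚ (V ⊓ LinearMap.ker P2 : Submodule ℚ _) := by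
    have h1 := LinearMap.finrank_range_add_finrank_ker (P2.domRestrict V)
    rw [LinearMap.range_domRestrict] at h1
    have h2 : finrank ℚ (LinearMap.ker (P2.domRestrict V))
        = finrank ℚ (V ⊓ LinearMap.ker P2 : Submodule ℚ _) := by
      rw [LinearMap.ker_domRestrict]
      have h3 : (LinearMap.ker P2).comap V.subtype
          = (V ⊓ LinearMap.ker P2).comap V.subtype := by
        ext x
        simp only [Submodule.mem_comap, Submodule.mem_inf]
        exact ⟨fun h => ⟨x.2, h⟩, fun h => h.2⟩
      rw [h3]
      exact (Submodule.comapSubtypeEquivOfLe inf_le_left).finrank_eq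
    rw [h2] at h1
    exact h1.symm
  have hVspan : V ≤ span ℚ (mon '' {T : Finset (Fin n) | T ∈ C.faces}) := by
    rw [hVdef, Submodule.span_le]
    rintro _ ⟨r, rfl⟩
    have : Aq r = rowFun C r := by rw [hAqdef]; rfl
    rw [this]
    exact rowFun_mem_span_mon C r
  have hmap : (V ⊓ LinearMap.ker P2 : Submodule ℚ _).map P1 = span ℚ (Set.range Bq) := by
    apply le_antisymm
    · rintro _ ⟨f, hf, rfl⟩
      obtain ⟨hf1, hf2⟩ := hf
      have hker : ∀ i, (¬ ∀ v ∈ S, i v = 0) → f i = 0 := by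
        intro i hi
        have h5 := LinearMap.mem_ker.mp hf2
        rw [hP2def] at h5
        exact congrFun h5 (⟨i, hi⟩ : {i : Fin n → Fin 2 // ¬ ∀ v ∈ S, i v = 0})
      have h6 := proj_mem C S f (hVspan hf1) hker
      have h7 : P1 f = fun i' => f (emap S i') := by rw [hP1def]; rfl
      have h8 : Set.range Bq = Set.range (rowFun (C.link S)) := by rw [hBqdef]; rfl
      rw [h7, h8]
      exact h6
    · rw [Submodule.span_le]
      rintro _ ⟨x, rfl⟩
      refine ⟨Aq (rhoRow C S x), ⟨?_, ?_⟩, ?_⟩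
      · rw [hVdef]
        exact Submodule.subset_span ⟨_, rfl⟩
      · refine LinearMap.mem_ker.mpr ?_
        rw [hP2def, hAqdef]
        funext j
        show ((C.designMatrix (rhoRow C S x) j.1 : ℤ) : ℚ) = 0
        rw [rho_row_vanish C S x j.1 j.2]
        norm_num
      · rw [hP1def, hAqdef, hBqdef]
        funext i'
        show ((C.designMatrix (rhoRow C S x) (emap S i') : ℤ) : ℚ)
          = (((C.link S).designMatrix x i' : ℤ) : ℚ)
        rw [rho_row_emap]
  have hP1inj : ∀ f ∈ (V ⊓ LinearMap.ker P2 : Submodule ℚ _), P1 f = 0 → f = 0 := by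
    intro f hf h1
    obtain ⟨hf1, hf2⟩ := hf
    funext i
    by_cases hi : ∀ v ∈ S, i v = 0
    · rw [hP1def] at h1
      have h3 : f (emap S (fun w : {v // v ∈ Sᶜ} => i w.1)) = 0 :=
        congrFun h1 (fun w : {v // v ∈ Sᶜ} => i w.1)
      rw [emap_restrict S i hi] at h3
      exact h3
    · have h5 := LinearMap.mem_ker.mp hf2
      rw [hP2def] at h5
      exact congrFun h5 ⟨i, hi⟩
  have hfr2 : finrank ℚ ((V ⊓ LinearMap.ker P2 : Submodule ℚ _).map P1)
      = finrank ℚ (V ⊓ LinearMap.ker P2 : Submodule ℚ _) := by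
    have hinj : Function.Injective (P1.domRestrict (V ⊓ LinearMap.ker P2)) := by
      rw [← LinearMap.ker_eq_bot, LinearMap.ker_eq_bot']
      intro m hm
      exact Subtype.ext (hP1inj m.1 m.2 hm)
    have h1 : finrank ℚ (LinearMap.range (P1.domRestrict (V ⊓ LinearMap.ker P2)))
        = finrank ℚ (V ⊓ LinearMap.ker P2 : Submodule ℚ _) :=
      LinearMap.finrank_range_of_inj hinj
    have h2 := finrank_congr (LinearMap.range_domRestrict (V ⊓ LinearMap.ker P2) P1)
    exact h2.symm.trans h1
  have hB : Bq.rank = finrank ℚ (span ℚ (Set.range Bq)) := Matrix.rank_eq_finrank_span_row Bq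
  have hBr : Bq.rank = finrank ℚ (V ⊓ LinearMap.ker P2 : Submodule ℚ _) :=
    hB.trans ((finrank_congr hmap).symm.trans hfr2)
  rw [hA, hrn, hReg, hBr]
  exact Nat.add_comm _ _

end Rank

end LinkAux
set_option maxHeartbeats 2000000 in
/-- If `C` is a unimodular simplicial complex on `[n]`, then for every face `S` of `C`
the link of `S` in `C` is unimodular. -/
theorem link_isUnimodular {n : ℕ} (C : SComplex (Fin n)) (hC : C.IsUnimodular)
    (S : Finset (Fin n)) (hS : S ∈ C.faces) :
    (C.link S).IsUnimodular := by
  classical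
  unfold SComplex.IsUnimodular IntUnimodular at hC ⊢
  obtain ⟨lam, hlam0, hlam⟩ := hC
  have hchain := LinkAux.rank_chain C S
  obtain ⟨r₀, c₀, hW0⟩ := LinkAux.exists_det_ne_zero
    (((C.designMatrix).map ((↑·) : ℤ → ℚ)).submatrix id
      (Subtype.val : {i : Fin n → Fin 2 // ¬ ∀ v ∈ S, i v = 0} → (Fin n → Fin 2)))
  have hσ : intRank (C.designMatrix) = intRank ((C.link S).designMatrix)
      + ((((C.designMatrix).map ((↑·) : ℤ → ℚ)).submatrix id
          (Subtype.val : {i : Fin n → Fin 2 // ¬ ∀ v ∈ S, i v = 0} → (Fin n → Fin 2))).rank) :=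
    hchain
  have hWq : (((C.designMatrix).submatrix r₀ (fun k => (c₀ k).1)).map
      ((↑·) : ℤ → ℚ)).det ≠ 0 := hW0
  have hWdet : ((C.designMatrix).submatrix r₀ (fun k => (c₀ k).1)).det ≠ 0 := by
    intro h
    apply hWq
    rw [LinkAux.cast_det, h]
    norm_num
  have key : ∀ (r' : Fin (intRank ((C.link S).designMatrix)) →
        ((G : {G // G ∈ (C.link S).facets}) × ((v : {v // v ∈ G.1}) → Fin 2)))
      (c' : Fin (intRank ((C.link S).designMatrix)) → ({v // v ∈ Sᶜ} → Fin 2)),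
      (((C.link S).designMatrix).submatrix r' c').det
          * ((C.designMatrix).submatrix r₀ (fun k => (c₀ k).1)).det = 0
        ∨ (((C.link S).designMatrix).submatrix r' c').det
          * ((C.designMatrix).submatrix r₀ (fun k => (c₀ k).1)).det = lam
        ∨ (((C.link S).designMatrix).submatrix r' c').det
          * ((C.designMatrix).submatrix r₀ (fun k => (c₀ k).1)).det = -lam := by
    intro r' c'
    have h1 := hlam
      (Sum.elim (fun l => LinkAux.rhoRow C S (r' l)) r₀ ∘
        ((finCongr hσ).trans finSumFinEquiv.symm))
      (Sum.elim (fun l => LinkAux.emap S (c' l)) (fun k => (c₀ k).1) ∘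
        ((finCongr hσ).trans finSumFinEquiv.symm))
    have hblocks : (C.designMatrix).submatrix
        (Sum.elim (fun l => LinkAux.rhoRow C S (r' l)) r₀)
        (Sum.elim (fun l => LinkAux.emap S (c' l)) (fun k => (c₀ k).1))
        = Matrix.fromBlocks (((C.link S).designMatrix).submatrix r' c') 0
            ((C.designMatrix).submatrix r₀ (fun l => LinkAux.emap S (c' l)))
            ((C.designMatrix).submatrix r₀ (fun k => (c₀ k).1)) := by
      ext i j
      rcases i with k | k <;> rcases j with l | l
      · simp only [Matrix.submatrix_apply, Sum.elim_inl, Matrix.fromBlocks_apply₁₁]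
        exact LinkAux.rho_row_emap C S (r' k) (c' l)
      · simp only [Matrix.submatrix_apply, Sum.elim_inl, Sum.elim_inr,
          Matrix.fromBlocks_apply₁₂, Matrix.zero_apply]
        exact LinkAux.rho_row_vanish C S (r' k) ((c₀ l).1) (c₀ l).2
      · simp only [Matrix.submatrix_apply, Sum.elim_inr, Sum.elim_inl,
          Matrix.fromBlocks_apply₂₁]
      · simp only [Matrix.submatrix_apply, Sum.elim_inr, Matrix.fromBlocks_apply₂₂]
    have hdeteq : ((C.designMatrix).submatrix
        (Sum.elim (fun l => LinkAux.rhoRow C S (r' l)) r₀ ∘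
          ((finCongr hσ).trans finSumFinEquiv.symm))
        (Sum.elim (fun l => LinkAux.emap S (c' l)) (fun k => (c₀ k).1) ∘
          ((finCongr hσ).trans finSumFinEquiv.symm))).det
        = (((C.link S).designMatrix).submatrix r' c').det
          * ((C.designMatrix).submatrix r₀ (fun k => (c₀ k).1)).det := by
      have e1 : (C.designMatrix).submatrix
          (Sum.elim (fun l => LinkAux.rhoRow C S (r' l)) r₀ ∘
            ((finCongr hσ).trans finSumFinEquiv.symm))
          (Sum.elim (fun l => LinkAux.emap S (c' l)) (fun k => (c₀ k).1) ∘
            ((finCongr hσ).trans finSumFinEquiv.symm))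
          = ((C.designMatrix).submatrix
              (Sum.elim (fun l => LinkAux.rhoRow C S (r' l)) r₀)
              (Sum.elim (fun l => LinkAux.emap S (c' l)) (fun k => (c₀ k).1))).submatrix
            ((finCongr hσ).trans finSumFinEquiv.symm)
            ((finCongr hσ).trans finSumFinEquiv.symm) :=
        (Matrix.submatrix_submatrix _ _ _ _ _).symm
      rw [e1, Matrix.det_submatrix_equiv_self, hblocks, Matrix.det_fromBlocks_zero₁₂]
    rw [hdeteq] at h1
    exact h1
  obtain ⟨rst, cst, hBst⟩ := LinkAux.exists_det_ne_zero
    (((C.link S).designMatrix).map ((↑·) : ℤ → ℚ))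
  have hlam'0 : (((C.link S).designMatrix).submatrix rst cst).det ≠ 0 := by
    intro h
    apply hBst
    have e2 : ((((C.link S).designMatrix).map ((↑·) : ℤ → ℚ)).submatrix rst cst)
        = (((C.link S).designMatrix).submatrix rst cst).map ((↑·) : ℤ → ℚ) := rfl
    rw [e2, LinkAux.cast_det, h]
    norm_num
  refine ⟨(((C.link S).designMatrix).submatrix rst cst).det, hlam'0, ?_⟩
  intro r c
  have hprod0 : (((C.link S).designMatrix).submatrix rst cst).det
      * ((C.designMatrix).submatrix r₀ (fun k => (c₀ k).1)).det ≠ 0 :=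
    mul_ne_zero hlam'0 hWdet
  have hst := key rst cst
  have hkey := key r c
  rcases hkey with hk | hk | hk
  · left
    rcases mul_eq_zero.mp hk with h | h
    · exact h
    · exact absurd h hWdet
  · rcases hst with h | h | h
    · exact absurd h hprod0
    · right; left
      have h2 : (((C.link S).designMatrix).submatrix r c).det
          * ((C.designMatrix).submatrix r₀ (fun k => (c₀ k).1)).det
          = (((C.link S).designMatrix).submatrix rst cst).det
          * ((C.designMatrix).submatrix r₀ (fun k => (c₀ k).1)).det := by
        exact hk.trans h.symm
      exact mul_right_cancel₀ hWdet h2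
    · right; right
      have h2 : (((C.link S).designMatrix).submatrix r c).det
          * ((C.designMatrix).submatrix r₀ (fun k => (c₀ k).1)).det
          = (-(((C.link S).designMatrix).submatrix rst cst).det)
          * ((C.designMatrix).submatrix r₀ (fun k => (c₀ k).1)).det := by
        rw [neg_mul]
        exact hk.trans ((neg_neg lam).symm.trans (congrArg Neg.neg h.symm))
      exact mul_right_cancel₀ hWdet h2
  · rcases hst with h | h | h
    · exact absurd h hprod0
    · right; right
      have h2 : (((C.link S).designMatrix).submatrix r c).det
          * ((C.designMatrix).submatrix r₀ (fun k => (c₀ k).1)).det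
          = (-(((C.link S).designMatrix).submatrix rst cst).det)
          * ((C.designMatrix).submatrix r₀ (fun k => (c₀ k).1)).det := by
        rw [neg_mul]
        exact hk.trans (congrArg Neg.neg h.symm)
      exact mul_right_cancel₀ hWdet h2
    · right; left
      have h2 : (((C.link S).designMatrix).submatrix r c).det
          * ((C.designMatrix).submatrix r₀ (fun k => (c₀ k).1)).det
          = (((C.link S).designMatrix).submatrix rst cst).det
          * ((C.designMatrix).submatrix r₀ (fun k => (c₀ k).1)).det := by
        exact hk.trans h.symm
      exact mul_right_cancel₀ hWdet h2
end

section
/- Let C be a simplicial complex on [n] and let C' be the simplicial complex on [n+1] whose facets are the sets F ∪ {n+1} for F a facet of C (the cone over C). Then A_C is unimodular if and only if A_{C'} is unimodular. -/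
open Finset

/-! ### Auxiliary material for the cone theorem -/

section UnimodGeneric

open Matrix

variable {m n m' n' : Type} [Fintype m] [Fintype n] [Fintype m'] [Fintype n']

private lemma rank_submatrix_le'' (A : Matrix m n ℚ) (r : m' → m) (c : n' → n) :
    (A.submatrix r c).rank ≤ A.rank := by
  classical
  have h : A.submatrix r c =
      ((1 : Matrix m m ℚ).submatrix r id) * A * ((1 : Matrix n n ℚ).submatrix id c) := by
    ext i j
    simp [Matrix.mul_apply, Matrix.one_apply, Finset.sum_ite_eq, Finset.sum_ite_eq',
      Matrix.submatrix_apply]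
  rw [h]
  exact le_trans (Matrix.rank_mul_le_left _ _) (Matrix.rank_mul_le_right _ _)

private lemma det_submatrix_eq_zero_of_rank_lt' (A : Matrix m n ℚ) {k : ℕ} (hk : A.rank < k)
    (r : Fin k → m) (c : Fin k → n) : (A.submatrix r c).det = 0 := by
  by_contra h
  have hu : IsUnit (A.submatrix r c) :=
    (Matrix.isUnit_iff_isUnit_det _).2 (isUnit_iff_ne_zero.2 h)
  have h1 : (A.submatrix r c).rank = k := by
    rw [Matrix.rank_of_isUnit _ hu, Fintype.card_fin]
  have := rank_submatrix_le'' A r c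
  omega

private lemma int_det_submatrix_eq_zero_of_rank_lt (A : Matrix m n ℤ) {k : ℕ}
    (hk : intRank A < k) (r : Fin k → m) (c : Fin k → n) : (A.submatrix r c).det = 0 := by
  have h : ((Int.castRingHom ℚ)) (A.submatrix r c).det = 0 := by
    rw [RingHom.map_det]
    show ((A.map ((↑·) : ℤ → ℚ)).submatrix r c).det = 0
    exact det_submatrix_eq_zero_of_rank_lt' _ hk r c
  simpa using h

private lemma range_prodMap' {R M₁ M₂ N₁ N₂ : Type*} [CommRing R] [AddCommGroup M₁]
    [AddCommGroup M₂] [AddCommGroup N₁] [AddCommGroup N₂] [Module R M₁] [Module R M₂]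
    [Module R N₁] [Module R N₂] (f : M₁ →ₗ[R] N₁) (g : M₂ →ₗ[R] N₂) :
    LinearMap.range (f.prodMap g) = (LinearMap.range f).prod (LinearMap.range g) := by
  ext ⟨x, y⟩
  simp only [LinearMap.mem_range, Submodule.mem_prod, LinearMap.prodMap_apply, Prod.mk.injEq]
  constructor
  · rintro ⟨⟨a, b⟩, ha, hb⟩
    exact ⟨⟨a, ha⟩, ⟨b, hb⟩⟩
  · rintro ⟨⟨a, ha⟩, ⟨b, hb⟩⟩
    exact ⟨(a, b), ha, hb⟩

/-- `p.prod q` is linearly equivalent to `p × q`. -/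
private def prodSubmoduleEquiv {R M N : Type*} [CommRing R] [AddCommGroup M] [AddCommGroup N]
    [Module R M] [Module R N] (p : Submodule R M) (q : Submodule R N) :
    (p.prod q) ≃ₗ[R] p × q where
  toFun x := (⟨x.1.1, x.2.1⟩, ⟨x.1.2, x.2.2⟩)
  invFun y := ⟨(y.1.1, y.2.1), ⟨y.1.2, y.2.2⟩⟩
  map_add' _ _ := rfl
  map_smul' _ _ := rfl
  left_inv _ := rfl
  right_inv _ := rfl

private lemma rank_fromBlocks_zero' (A : Matrix m n ℚ) (B : Matrix m' n' ℚ) :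
    (Matrix.fromBlocks A 0 0 B).rank = A.rank + B.rank := by
  classical
  set f := A.mulVecLin
  set g := B.mulVecLin
  set e₁ := (LinearEquiv.sumArrowLequivProdArrow n n' ℚ ℚ)
  set e₂ := (LinearEquiv.sumArrowLequivProdArrow m m' ℚ ℚ)
  have key : (Matrix.fromBlocks A 0 0 B).mulVecLin
      = (e₂.symm : ((m → ℚ) × (m' → ℚ)) →ₗ[ℚ] (m ⊕ m' → ℚ)) ∘ₗ (f.prodMap g) ∘ₗ
        (e₁ : (n ⊕ n' → ℚ) →ₗ[ℚ] (n → ℚ) × (n' → ℚ)) := by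
    apply LinearMap.ext
    intro x
    funext i
    cases i with
    | inl i =>
      simp [e₁, e₂, f, g, Matrix.mulVecLin, LinearEquiv.sumArrowLequivProdArrow,
        Matrix.fromBlocks_mulVec, Matrix.mulVec, dotProduct,
        Equiv.sumArrowEquivProdArrow]
    | inr i =>
      simp [e₁, e₂, f, g, Matrix.mulVecLin, LinearEquiv.sumArrowLequivProdArrow,
        Matrix.fromBlocks_mulVec, Matrix.mulVec, dotProduct,
        Equiv.sumArrowEquivProdArrow]
  rw [Matrix.rank, key, LinearMap.range_comp,
    LinearMap.range_comp_of_range_eq_top _ e₁.range,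
    LinearEquiv.finrank_map_eq, range_prodMap']
  rw [(prodSubmoduleEquiv (LinearMap.range f) (LinearMap.range g)).finrank_eq,
    Module.finrank_prod]
  rfl

private lemma exists_sum_equiv {k a b : ℕ} (s : Finset (Fin k)) (ha : s.card = a)
    (hb : sᶜ.card = b) :
    ∃ e : Fin a ⊕ Fin b ≃ Fin k, (∀ x, e (Sum.inl x) ∈ s) ∧ (∀ y, e (Sum.inr y) ∉ s) := by
  classical
  have h1 : Nonempty (Fin a ≃ {x // x ∈ s}) := by
    apply Fintype.card_eq.mp
    rw [Fintype.card_fin, Fintype.card_coe, ha]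
  have h2 : Nonempty (Fin b ≃ {x : Fin k // ¬ x ∈ s}) := by
    apply Fintype.card_eq.mp
    rw [Fintype.card_fin, Fintype.card_subtype, ← hb]
    congr 1
    ext x
    simp
  obtain ⟨u⟩ := h1
  obtain ⟨v⟩ := h2
  refine ⟨(Equiv.sumCongr u v).trans (Equiv.sumCompl (· ∈ s)), fun x => ?_, fun y => ?_⟩
  · simpa using (u x).2
  · simpa using (v y).2

private lemma det_submatrix_fromBlocks_classify {k : ℕ} (A B : Matrix m n ℤ)
    (r : Fin k → m ⊕ m) (c : Fin k → n ⊕ n) :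
    ((Matrix.fromBlocks A 0 0 B).submatrix r c).det = 0 ∨
    ∃ (a b : ℕ) (_ : a + b = k) (r1 : Fin a → m) (c1 : Fin a → n)
      (r2 : Fin b → m) (c2 : Fin b → n) (ε : ℤ), (ε = 1 ∨ ε = -1) ∧
      ((Matrix.fromBlocks A 0 0 B).submatrix r c).det
        = ε * (A.submatrix r1 c1).det * (B.submatrix r2 c2).det := by
  classical
  set M := (Matrix.fromBlocks A 0 0 B).submatrix r c with hM
  set s : Finset (Fin k) := Finset.univ.filter (fun i => (r i).isLeft) with hs
  set t : Finset (Fin k) := Finset.univ.filter (fun i => (c i).isLeft) with ht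
  by_cases hcard : s.card = t.card
  · right
    set a := s.card with hA
    set b := sᶜ.card with hB
    have hab : a + b = k := by rw [hA, hB, Finset.card_add_card_compl, Fintype.card_fin]
    have htc : tᶜ.card = b := by
      have h1 : t.card + tᶜ.card = k := by rw [Finset.card_add_card_compl, Fintype.card_fin]
      omega
    obtain ⟨e₁, he₁l, he₁r⟩ := exists_sum_equiv s rfl rfl
    obtain ⟨e₂, he₂l, he₂r⟩ := exists_sum_equiv t hcard.symm htc
    have hr₁ : ∀ x : Fin a, (r (e₁ (Sum.inl x))).isLeft := by
      intro x; have := he₁l x; simpa [hs] using this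
    have hr₂ : ∀ x : Fin b, (r (e₁ (Sum.inr x))).isRight := by
      intro x; have := he₁r x
      simp only [hs, Finset.mem_filter, Finset.mem_univ, true_and] at this
      exact Sum.not_isLeft.mp this
    have hc₁ : ∀ x : Fin a, (c (e₂ (Sum.inl x))).isLeft := by
      intro x; have := he₂l x; simpa [ht] using this
    have hc₂ : ∀ x : Fin b, (c (e₂ (Sum.inr x))).isRight := by
      intro x; have := he₂r x
      simp only [ht, Finset.mem_filter, Finset.mem_univ, true_and] at this
      exact Sum.not_isLeft.mp this
    refine ⟨a, b, hab, fun x => (r (e₁ (Sum.inl x))).getLeft (hr₁ x),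
      fun x => (c (e₂ (Sum.inl x))).getLeft (hc₁ x),
      fun x => (r (e₁ (Sum.inr x))).getRight (hr₂ x),
      fun x => (c (e₂ (Sum.inr x))).getRight (hc₂ x), ?_⟩
    set r1 := fun x => (r (e₁ (Sum.inl x))).getLeft (hr₁ x) with hr1
    set c1 := fun x => (c (e₂ (Sum.inl x))).getLeft (hc₁ x) with hc1
    set r2 := fun x => (r (e₁ (Sum.inr x))).getRight (hr₂ x) with hr2
    set c2 := fun x => (c (e₂ (Sum.inr x))).getRight (hc₂ x) with hc2
    set N := (Matrix.fromBlocks A 0 0 B).submatrix (r ∘ ⇑e₁) (c ∘ ⇑e₂) with hN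
    have hNblocks : N = Matrix.fromBlocks (A.submatrix r1 c1) 0 0 (B.submatrix r2 c2) := by
      ext i j
      cases i with
      | inl i =>
        cases j with
        | inl j =>
          have h1 : r (e₁ (Sum.inl i)) = Sum.inl (r1 i) := (Sum.inl_getLeft _ _).symm
          have h2 : c (e₂ (Sum.inl j)) = Sum.inl (c1 j) := (Sum.inl_getLeft _ _).symm
          simp [hN, h1, h2]
        | inr j =>
          have h1 : r (e₁ (Sum.inl i)) = Sum.inl (r1 i) := (Sum.inl_getLeft _ _).symm
          have h2 : c (e₂ (Sum.inr j)) = Sum.inr (c2 j) := (Sum.inr_getRight _ _).symm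
          simp [hN, h1, h2]
      | inr i =>
        cases j with
        | inl j =>
          have h1 : r (e₁ (Sum.inr i)) = Sum.inr (r2 i) := (Sum.inr_getRight _ _).symm
          have h2 : c (e₂ (Sum.inl j)) = Sum.inl (c1 j) := (Sum.inl_getLeft _ _).symm
          simp [hN, h1, h2]
        | inr j =>
          have h1 : r (e₁ (Sum.inr i)) = Sum.inr (r2 i) := (Sum.inr_getRight _ _).symm
          have h2 : c (e₂ (Sum.inr j)) = Sum.inr (c2 j) := (Sum.inr_getRight _ _).symm
          simp [hN, h1, h2]
    set π : Equiv.Perm (Fin a ⊕ Fin b) := e₁.trans e₂.symm with hπ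
    have h1 : M.submatrix ⇑e₁ ⇑e₁ = N.submatrix id ⇑π := by
      ext i j
      simp [hM, hN, hπ]
    have hdet : M.det = (Equiv.Perm.sign π : ℤ) * N.det := by
      rw [← Matrix.det_submatrix_equiv_self e₁ M, h1, Matrix.det_permute']
      norm_cast
    refine ⟨(Equiv.Perm.sign π : ℤ),
      by rcases Int.units_eq_one_or (Equiv.Perm.sign π) with h | h <;> simp [h], ?_⟩
    rw [hdet, hNblocks, Matrix.det_fromBlocks_zero₁₂, mul_assoc]
  · left
    rw [hM, Matrix.det_apply]
    apply Finset.sum_eq_zero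
    intro σ _
    have hzero : ∃ i : Fin k, (Matrix.fromBlocks A 0 0 B) (r (σ i)) (c i) = 0 := by
      by_cases h1 : ∃ i, σ i ∈ s ∧ i ∉ t
      · obtain ⟨i, hi1, hi2⟩ := h1
        refine ⟨i, ?_⟩
        simp only [hs, Finset.mem_filter] at hi1
        simp only [ht, Finset.mem_filter, Finset.mem_univ, true_and] at hi2
        obtain ⟨x, hx⟩ := Sum.isLeft_iff.mp hi1.2
        obtain ⟨y, hy⟩ := Sum.isRight_iff.mp (Sum.not_isLeft.mp hi2)
        rw [hx, hy]
        rfl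
      · by_cases h2 : ∃ i, i ∈ t ∧ σ i ∉ s
        · obtain ⟨i, hi1, hi2⟩ := h2
          refine ⟨i, ?_⟩
          simp only [ht, Finset.mem_filter] at hi1
          simp only [hs, Finset.mem_filter, Finset.mem_univ, true_and] at hi2
          obtain ⟨y, hy⟩ := Sum.isRight_iff.mp (Sum.not_isLeft.mp hi2)
          obtain ⟨x, hx⟩ := Sum.isLeft_iff.mp hi1.2
          rw [hx, hy]
          rfl
        · exfalso
          push_neg at h1 h2
          have heq : t = Finset.univ.filter (fun i => σ i ∈ s) := by
            ext i
            simp only [Finset.mem_filter, Finset.mem_univ, true_and]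
            exact ⟨fun hi => h2 i hi, fun hi => h1 i hi⟩
          have hcard2 : (Finset.univ.filter (fun i => σ i ∈ s)).card = s.card := by
            apply Finset.card_bij (fun i _ => σ i)
            · intro i hi
              simpa using (Finset.mem_filter.mp hi).2
            · intro i _ j _ h
              exact σ.injective h
            · intro j hj
              exact ⟨σ.symm j, by simpa using hj, by simp⟩
          rw [heq, hcard2] at hcard
          exact hcard rfl
    obtain ⟨i, hi⟩ := hzero
    have hp : ∏ j, M (σ j) j = 0 := Finset.prod_eq_zero (Finset.mem_univ i)
      (by simp only [hM, Matrix.submatrix_apply]; exact hi)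
    rw [hp, smul_zero]

private lemma intRank_submatrix' (B : Matrix m n ℤ) (e₁ : m' ≃ m) (e₂ : n' ≃ n) :
    intRank (B.submatrix ⇑e₁ ⇑e₂) = intRank B := by
  unfold intRank
  have h : (B.submatrix ⇑e₁ ⇑e₂).map ((↑·) : ℤ → ℚ)
      = (B.map ((↑·) : ℤ → ℚ)).submatrix ⇑e₁ ⇑e₂ := rfl
  rw [h]
  apply le_antisymm
  · exact rank_submatrix_le'' _ ⇑e₁ ⇑e₂
  · have h2 : B.map ((↑·) : ℤ → ℚ)
        = ((B.map ((↑·) : ℤ → ℚ)).submatrix ⇑e₁ ⇑e₂).submatrix ⇑e₁.symm ⇑e₂.symm := by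
      ext i j
      simp
    conv_lhs => rw [h2]
    exact rank_submatrix_le'' _ ⇑e₁.symm ⇑e₂.symm

private lemma intUnimodular_submatrix_iff (B : Matrix m n ℤ) (e₁ : m' ≃ m) (e₂ : n' ≃ n) :
    IntUnimodular (B.submatrix ⇑e₁ ⇑e₂) ↔ IntUnimodular B := by
  have hr := intRank_submatrix' B e₁ e₂
  constructor
  · rintro ⟨lam, h0, h⟩
    refine ⟨lam, h0, fun r c => ?_⟩
    have key := h (⇑e₁.symm ∘ r ∘ ⇑(finCongr hr)) (⇑e₂.symm ∘ c ∘ ⇑(finCongr hr))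
    have heq : (B.submatrix ⇑e₁ ⇑e₂).submatrix (⇑e₁.symm ∘ r ∘ ⇑(finCongr hr))
        (⇑e₂.symm ∘ c ∘ ⇑(finCongr hr))
        = (B.submatrix r c).submatrix ⇑(finCongr hr) ⇑(finCongr hr) := by
      ext i j
      simp
    rwa [heq, Matrix.det_submatrix_equiv_self] at key
  · rintro ⟨lam, h0, h⟩
    refine ⟨lam, h0, fun r c => ?_⟩
    have key := h (⇑e₁ ∘ r ∘ ⇑(finCongr hr.symm)) (⇑e₂ ∘ c ∘ ⇑(finCongr hr.symm))
    have heq : B.submatrix (⇑e₁ ∘ r ∘ ⇑(finCongr hr.symm)) (⇑e₂ ∘ c ∘ ⇑(finCongr hr.symm))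
        = ((B.submatrix ⇑e₁ ⇑e₂).submatrix r c).submatrix ⇑(finCongr hr.symm)
          ⇑(finCongr hr.symm) := by
      ext i j
      simp
    rwa [heq, Matrix.det_submatrix_equiv_self] at key

private lemma intRank_fromBlocks' (A B : Matrix m n ℤ) :
    intRank (Matrix.fromBlocks A 0 0 B) = intRank A + intRank B := by
  unfold intRank
  have h : (Matrix.fromBlocks A 0 0 B).map ((↑·) : ℤ → ℚ)
      = Matrix.fromBlocks (A.map ((↑·) : ℤ → ℚ)) 0 0 (B.map ((↑·) : ℤ → ℚ)) := by
    ext (i | i) (j | j) <;> simp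
  rw [h, rank_fromBlocks_zero']

private lemma tri_helper {lam ε x y : ℤ} (hε : ε = 1 ∨ ε = -1)
    (hx : x = 0 ∨ x = lam ∨ x = -lam) (hy : y = 0 ∨ y = lam ∨ y = -lam) :
    ε * x * y = 0 ∨ ε * x * y = lam * lam ∨ ε * x * y = -(lam * lam) := by
  rcases hε with rfl | rfl <;> rcases hx with rfl | rfl | rfl <;>
    rcases hy with rfl | rfl | rfl <;>
    first
      | (left; ring1)
      | (right; left; ring1)
      | (right; right; ring1)

private lemma intUnimodular_fromBlocks_iff (A : Matrix m n ℤ) :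
    IntUnimodular A ↔ IntUnimodular (Matrix.fromBlocks A 0 0 A) := by
  have hr : intRank (Matrix.fromBlocks A 0 0 A) = intRank A + intRank A :=
    intRank_fromBlocks' A A
  constructor
  · rintro ⟨lam, h0, h⟩
    refine ⟨lam * lam, mul_ne_zero h0 h0, fun r c => ?_⟩
    rcases det_submatrix_fromBlocks_classify A A r c with hz |
      ⟨a, b, hab, r1, c1, r2, c2, ε, hε, heq⟩
    · exact Or.inl hz
    rw [hr] at hab
    rcases lt_trichotomy a (intRank A) with hlt | heqd | hgt
    · have hb : intRank A < b := by omega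
      left
      rw [heq, int_det_submatrix_eq_zero_of_rank_lt A hb r2 c2, mul_zero]
    · subst heqd
      have hbd : b = intRank A := by omega
      subst hbd
      rw [heq]
      exact tri_helper hε (h r1 c1) (h r2 c2)
    · left
      rw [heq, int_det_submatrix_eq_zero_of_rank_lt A hgt r1 c1, mul_zero, zero_mul]
  · rintro ⟨lam, h0, h⟩
    have pairs : ∀ (r1 : Fin (intRank A) → m) (c1 : Fin (intRank A) → n)
        (r2 : Fin (intRank A) → m) (c2 : Fin (intRank A) → n),
        (A.submatrix r1 c1).det * (A.submatrix r2 c2).det = 0 ∨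
        (A.submatrix r1 c1).det * (A.submatrix r2 c2).det = lam ∨
        (A.submatrix r1 c1).det * (A.submatrix r2 c2).det = -lam := by
      intro r1 c1 r2 c2
      set e : Fin (intRank (Matrix.fromBlocks A 0 0 A)) ≃ Fin (intRank A) ⊕ Fin (intRank A) :=
        (finCongr hr).trans finSumFinEquiv.symm with he
      have key := h (Sum.elim (Sum.inl ∘ r1) (Sum.inr ∘ r2) ∘ ⇑e)
        (Sum.elim (Sum.inl ∘ c1) (Sum.inr ∘ c2) ∘ ⇑e)
      have heq : (Matrix.fromBlocks A 0 0 A).submatrix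
          (Sum.elim (Sum.inl ∘ r1) (Sum.inr ∘ r2) ∘ ⇑e)
          (Sum.elim (Sum.inl ∘ c1) (Sum.inr ∘ c2) ∘ ⇑e)
          = (Matrix.fromBlocks (A.submatrix r1 c1) 0 0 (A.submatrix r2 c2)).submatrix ⇑e ⇑e := by
        ext i j
        rcases hi : e i with i' | i' <;> rcases hj : e j with j' | j' <;>
          simp [Matrix.submatrix_apply, hi, hj]
      rwa [heq, Matrix.det_submatrix_equiv_self, Matrix.det_fromBlocks_zero₁₂] at key
    by_cases hall : ∀ (r : Fin (intRank A) → m) (c : Fin (intRank A) → n),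
        (A.submatrix r c).det = 0
    · exact ⟨1, one_ne_zero, fun r c => Or.inl (hall r c)⟩
    push_neg at hall
    obtain ⟨r0, c0, hM0⟩ := hall
    set M0 := (A.submatrix r0 c0).det with hM0def
    refine ⟨M0, hM0, fun r c => ?_⟩
    set M := (A.submatrix r c).det with hMdef
    have h1 := pairs r c r0 c0
    have h2 := pairs r0 c0 r0 c0
    rw [← hMdef, ← hM0def] at h1
    rw [← hM0def] at h2
    rcases h1 with h1 | h1 | h1
    · left
      rcases mul_eq_zero.mp h1 with h | h
      · exact h
      · exact absurd h hM0
    · rcases h2 with h2 | h2 | h2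
      · exact absurd h2 (mul_ne_zero hM0 hM0)
      · right; left
        exact mul_right_cancel₀ hM0 (h1.trans h2.symm)
      · right; right
        apply mul_right_cancel₀ hM0
        rw [h1, neg_mul]
        linarith
    · rcases h2 with h2 | h2 | h2
      · exact absurd h2 (mul_ne_zero hM0 hM0)
      · right; right
        apply mul_right_cancel₀ hM0
        rw [h1, neg_mul]
        linarith
      · right; left
        apply mul_right_cancel₀ hM0
        rw [h1]
        linarith

end UnimodGeneric
namespace ConeProof

open SComplex

variable {n : ℕ}

/-- restriction of a subset of `Fin (n+1)` to `Fin n` -/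
def res (s : Finset (Fin (n + 1))) : Finset (Fin n) :=
  Finset.univ.filter fun v => v.castSucc ∈ s

def lift (F : Finset (Fin n)) : Finset (Fin (n + 1)) :=
  insert (Fin.last n) (F.map castSuccEmb')

lemma mem_lift {F : Finset (Fin n)} {x : Fin (n + 1)} :
    x ∈ lift F ↔ x = Fin.last n ∨ ∃ w ∈ F, w.castSucc = x := by
  simp [lift, castSuccEmb']

lemma last_mem_lift (F : Finset (Fin n)) : Fin.last n ∈ lift F := by simp [mem_lift]

lemma castSucc_mem_lift {F : Finset (Fin n)} {v : Fin n} : v.castSucc ∈ lift F ↔ v ∈ F := by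
  rw [mem_lift]
  constructor
  · rintro (h | ⟨w, hw, he⟩)
    · exact absurd h (Fin.castSucc_lt_last v).ne
    · rwa [← Fin.castSucc_injective n he]
  · exact fun h => Or.inr ⟨v, h, rfl⟩

lemma res_lift (F : Finset (Fin n)) : res (lift F) = F := by
  ext v
  simp [res, castSucc_mem_lift]

lemma subset_lift_res (s : Finset (Fin (n + 1))) : s ⊆ lift (res s) := by
  intro x hx
  rcases eq_or_ne x (Fin.last n) with rfl | hne
  · exact last_mem_lift _
  · obtain ⟨w, rfl⟩ := Fin.exists_castSucc_eq.mpr hne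
    rw [castSucc_mem_lift]
    simp [res, hx]

lemma res_mono {s t : Finset (Fin (n + 1))} (h : s ⊆ t) : res s ⊆ res t := by
  intro v hv
  simp only [res, Finset.mem_filter, Finset.mem_univ, true_and] at hv ⊢
  exact h hv

lemma lift_mono {s t : Finset (Fin n)} (h : s ⊆ t) : lift s ⊆ lift t := by
  intro v hv
  rw [mem_lift] at hv ⊢
  rcases hv with h' | ⟨w, hw, he⟩
  · exact Or.inl h'
  · exact Or.inr ⟨w, h hw, he⟩

lemma mem_cone_faces {C : SComplex (Fin n)} {s : Finset (Fin (n + 1))} :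
    s ∈ (cone C).faces ↔ res s ∈ C.faces := by
  simp [cone, res]

lemma mem_facets {V : Type} [DecidableEq V] {C : SComplex V} {F : Finset V} :
    F ∈ C.facets ↔ F ∈ C.faces ∧ ∀ G ∈ C.faces, F ⊆ G → F = G := by
  simp [SComplex.facets]

lemma lift_mem_facets {C : SComplex (Fin n)} {F : Finset (Fin n)} (hF : F ∈ C.facets) :
    lift F ∈ (cone C).facets := by
  rw [mem_facets] at hF ⊢
  refine ⟨by rw [mem_cone_faces, res_lift]; exact hF.1, ?_⟩
  intro G hG hsub
  rw [mem_cone_faces] at hG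
  have h1 : F ⊆ res G := by
    have := res_mono hsub
    rwa [res_lift] at this
  have h2 : F = res G := hF.2 _ hG h1
  refine subset_antisymm hsub ?_
  calc G ⊆ lift (res G) := subset_lift_res G
    _ = lift F := by rw [← h2]

lemma facets_cone_charac {C : SComplex (Fin n)} {F' : Finset (Fin (n + 1))}
    (hF' : F' ∈ (cone C).facets) : res F' ∈ C.facets ∧ F' = lift (res F') := by
  rw [mem_facets] at hF'
  have hface : res F' ∈ C.faces := mem_cone_faces.mp hF'.1
  have hlift : F' = lift (res F') := by
    refine hF'.2 _ ?_ (subset_lift_res F')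
    rw [mem_cone_faces, res_lift]
    exact hface
  refine ⟨mem_facets.mpr ⟨hface, ?_⟩, hlift⟩
  intro G hG hsub
  have h1 : F' = lift G := by
    refine hF'.2 _ ?_ ?_
    · rw [mem_cone_faces, res_lift]; exact hG
    · calc F' ⊆ lift (res F') := subset_lift_res F'
        _ ⊆ lift G := lift_mono hsub
  rw [h1, res_lift]

/-- the facet bijection -/
def facetEquiv (C : SComplex (Fin n)) :
    {F' // F' ∈ (cone C).facets} ≃ {F // F ∈ C.facets} where
  toFun F' := ⟨res F'.1, (facets_cone_charac F'.2).1⟩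
  invFun F := ⟨lift F.1, lift_mem_facets F.2⟩
  left_inv F' := Subtype.ext (facets_cone_charac F'.2).2.symm
  right_inv F := Subtype.ext (res_lift F.1)

end ConeProof

namespace ConeProof

open SComplex

variable {n : ℕ}

lemma mem_res {s : Finset (Fin (n + 1))} {v : Fin n} : v ∈ res s ↔ v.castSucc ∈ s := by
  simp [res]

lemma last_mem_facet {C : SComplex (Fin n)} {F' : Finset (Fin (n + 1))}
    (hF' : F' ∈ (cone C).facets) : Fin.last n ∈ F' := by
  rw [(facets_cone_charac hF').2]
  exact last_mem_lift _

lemma castPred_mem_of_mem_lift {F : Finset (Fin n)} {x : Fin (n + 1)} (hx : x ∈ lift F)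
    (h : x ≠ Fin.last n) : x.castPred h ∈ F := by
  rw [mem_lift] at hx
  rcases hx with rfl | ⟨w, hw, he⟩
  · exact absurd rfl h
  · subst he
    rwa [Fin.castPred_castSucc]

lemma fin2_cases (x : Fin 2) : x = 0 ∨ x = 1 := by omega

/-- sigma extensionality for pairs (facet, labeling) -/
lemma sigma_fun_ext {β γ : Type} {S : Finset β → Prop}
    {F G : {s : Finset β // S s}} (h : F.1 = G.1)
    {f : {v // v ∈ F.1} → γ} {g : {v // v ∈ G.1} → γ}
    (hfg : ∀ (v : β) (hv : v ∈ F.1), f ⟨v, hv⟩ = g ⟨v, h ▸ hv⟩) :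
    (⟨F, f⟩ : (s : {s // S s}) × ({v // v ∈ s.1} → γ)) = ⟨G, g⟩ := by
  obtain ⟨F, hF⟩ := F
  obtain ⟨G, hG⟩ := G
  simp only at h
  subst h
  have hp : hF = hG := rfl
  subst hp
  have hfun : f = g := funext fun v => hfg v.1 v.2
  rw [hfun]

abbrev Rows (C : SComplex (Fin n)) : Type :=
  (F : {F // F ∈ C.facets}) × ({v // v ∈ F.1} → Fin 2)

/-- the row equivalence -/
def rowEquiv (C : SComplex (Fin n)) : Rows (cone C) ≃ Rows C ⊕ Rows C where
  toFun x :=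
    if x.2 ⟨Fin.last n, last_mem_facet x.1.2⟩ = 0 then
      Sum.inl ⟨facetEquiv C x.1, fun v => x.2 ⟨v.1.castSucc, mem_res.mp v.2⟩⟩
    else
      Sum.inr ⟨facetEquiv C x.1, fun v => x.2 ⟨v.1.castSucc, mem_res.mp v.2⟩⟩
  invFun y :=
    match y with
    | Sum.inl ⟨F, j⟩ => ⟨(facetEquiv C).symm F, fun v =>
        if h : v.1 = Fin.last n then 0
        else j ⟨v.1.castPred h, castPred_mem_of_mem_lift v.2 h⟩⟩
    | Sum.inr ⟨F, j⟩ => ⟨(facetEquiv C).symm F, fun v =>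
        if h : v.1 = Fin.last n then 1
        else j ⟨v.1.castPred h, castPred_mem_of_mem_lift v.2 h⟩⟩
  left_inv := by
    rintro ⟨F', j'⟩
    by_cases h0 : j' ⟨Fin.last n, last_mem_facet F'.2⟩ = 0
    · simp only [h0, if_pos]
      refine sigma_fun_ext (by rw [Equiv.symm_apply_apply]) ?_
      intro v hv
      by_cases h : v = Fin.last n
      · subst h
        rw [dif_pos rfl]
        exact h0.symm
      · rw [dif_neg h]
        exact congrArg j' (Subtype.ext (Fin.castSucc_castPred v h))
    · simp only [h0, if_neg, if_false]
      refine sigma_fun_ext (by rw [Equiv.symm_apply_apply]) ?_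
      intro v hv
      by_cases h : v = Fin.last n
      · subst h
        rw [dif_pos rfl]
        rcases fin2_cases (j' ⟨Fin.last n, last_mem_facet F'.2⟩) with h1 | h1
        · exact absurd h1 h0
        · exact h1.symm
      · rw [dif_neg h]
        exact congrArg j' (Subtype.ext (Fin.castSucc_castPred v h))
  right_inv := by
    rintro (⟨F, j⟩ | ⟨F, j⟩)
    · have hcond : (if h : (Fin.last n) = Fin.last n then (0 : Fin 2)
          else j ⟨(Fin.last n).castPred h, castPred_mem_of_mem_lift (last_mem_facet
            ((facetEquiv C).symm F).2) h⟩) = 0 := by rw [dif_pos rfl]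
      simp only [hcond, if_pos]
      refine congrArg Sum.inl (sigma_fun_ext (by rw [Equiv.apply_symm_apply]) ?_)
      intro v hv
      rw [dif_neg (Fin.castSucc_lt_last ⟨v, _⟩).ne]
      exact congrArg j (Subtype.ext (by simp [Fin.castPred_castSucc]))
    · have hcond : (if h : (Fin.last n) = Fin.last n then (1 : Fin 2)
          else j ⟨(Fin.last n).castPred h, castPred_mem_of_mem_lift (last_mem_facet
            ((facetEquiv C).symm F).2) h⟩) = 1 := by rw [dif_pos rfl]
      simp only [hcond, one_ne_zero, if_false]
      refine congrArg Sum.inr (sigma_fun_ext (by rw [Equiv.apply_symm_apply]) ?_)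
      intro v hv
      rw [dif_neg (Fin.castSucc_lt_last ⟨v, _⟩).ne]
      exact congrArg j (Subtype.ext (by simp [Fin.castPred_castSucc]))

/-- the column equivalence -/
def colEquiv : (Fin (n + 1) → Fin 2) ≃ (Fin n → Fin 2) ⊕ (Fin n → Fin 2) where
  toFun i := if i (Fin.last n) = 0 then Sum.inl (fun v => i v.castSucc)
    else Sum.inr (fun v => i v.castSucc)
  invFun y := match y with
    | Sum.inl i => Fin.snoc i 0
    | Sum.inr i => Fin.snoc i 1
  left_inv := by
    intro i
    by_cases h : i (Fin.last n) = 0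
    · simp only [h, if_pos]
      funext v
      induction v using Fin.lastCases with
      | last => rw [Fin.snoc_last, h]
      | cast v => rw [Fin.snoc_castSucc]
    · simp only [h, if_neg, if_false]
      funext v
      induction v using Fin.lastCases with
      | last =>
        rw [Fin.snoc_last]
        rcases fin2_cases (i (Fin.last n)) with h1 | h1
        · exact absurd h1 h
        · exact h1.symm
      | cast v => rw [Fin.snoc_castSucc]
  right_inv := by
    rintro (i | i)
    · simp only [Fin.snoc_last, if_pos]
      exact congrArg Sum.inl (funext fun v => Fin.snoc_castSucc _ _ _)
    · simp only [Fin.snoc_last, one_ne_zero, if_false]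
      exact congrArg Sum.inr (funext fun v => Fin.snoc_castSucc _ _ _)

end ConeProof

namespace ConeProof

open SComplex

variable {n : ℕ}

theorem designMatrix_cone_eq (C : SComplex (Fin n)) :
    designMatrix (cone C) =
      (Matrix.fromBlocks (designMatrix C) 0 0 (designMatrix C)).submatrix
        (rowEquiv C) colEquiv := by
  ext x i
  obtain ⟨⟨F', hF'⟩, j'⟩ := x
  rw [Matrix.submatrix_apply]
  by_cases hb : j' ⟨Fin.last n, last_mem_facet hF'⟩ = 0 <;>
    by_cases hb' : i (Fin.last n) = 0
  · rw [show rowEquiv C ⟨⟨F', hF'⟩, j'⟩ = Sum.inl ⟨facetEquiv C ⟨F', hF'⟩,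
        fun v => j' ⟨v.1.castSucc, mem_res.mp v.2⟩⟩ from if_pos hb,
      show colEquiv i = Sum.inl (fun v => i v.castSucc) from if_pos hb']
    show (if ∀ v : {v // v ∈ F'}, i v.1 = j' v then 1 else 0 : ℤ) = _
    rw [Matrix.fromBlocks_apply₁₁]
    show _ = (if ∀ v : {v : Fin n // v ∈ res F'}, i v.1.castSucc
      = j' ⟨v.1.castSucc, mem_res.mp v.2⟩ then 1 else 0 : ℤ)
    refine if_congr ⟨fun h v => h ⟨v.1.castSucc, mem_res.mp v.2⟩, fun h v => ?_⟩ rfl rfl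
    obtain ⟨v, hv⟩ := v
    by_cases hlast : v = Fin.last n
    · subst hlast
      exact hb'.trans hb.symm
    · obtain ⟨w, rfl⟩ := Fin.exists_castSucc_eq.mpr hlast
      exact h ⟨w, mem_res.mpr hv⟩
  · rw [show rowEquiv C ⟨⟨F', hF'⟩, j'⟩ = Sum.inl ⟨facetEquiv C ⟨F', hF'⟩,
        fun v => j' ⟨v.1.castSucc, mem_res.mp v.2⟩⟩ from if_pos hb,
      show colEquiv i = Sum.inr (fun v => i v.castSucc) from if_neg hb']
    show (if ∀ v : {v // v ∈ F'}, i v.1 = j' v then 1 else 0 : ℤ) = _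
    rw [Matrix.fromBlocks_apply₁₂]
    refine (if_neg ?_).trans rfl
    intro hall
    exact hb' ((hall ⟨Fin.last n, last_mem_facet hF'⟩).trans hb)
  · rw [show rowEquiv C ⟨⟨F', hF'⟩, j'⟩ = Sum.inr ⟨facetEquiv C ⟨F', hF'⟩,
        fun v => j' ⟨v.1.castSucc, mem_res.mp v.2⟩⟩ from if_neg hb,
      show colEquiv i = Sum.inl (fun v => i v.castSucc) from if_pos hb']
    show (if ∀ v : {v // v ∈ F'}, i v.1 = j' v then 1 else 0 : ℤ) = _
    rw [Matrix.fromBlocks_apply₂₁]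
    refine (if_neg ?_).trans rfl
    intro hall
    exact hb (((hall ⟨Fin.last n, last_mem_facet hF'⟩).symm).trans hb')
  · rw [show rowEquiv C ⟨⟨F', hF'⟩, j'⟩ = Sum.inr ⟨facetEquiv C ⟨F', hF'⟩,
        fun v => j' ⟨v.1.castSucc, mem_res.mp v.2⟩⟩ from if_neg hb,
      show colEquiv i = Sum.inr (fun v => i v.castSucc) from if_neg hb']
    show (if ∀ v : {v // v ∈ F'}, i v.1 = j' v then 1 else 0 : ℤ) = _
    rw [Matrix.fromBlocks_apply₂₂]
    show _ = (if ∀ v : {v : Fin n // v ∈ res F'}, i v.1.castSucc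
      = j' ⟨v.1.castSucc, mem_res.mp v.2⟩ then 1 else 0 : ℤ)
    refine if_congr ⟨fun h v => h ⟨v.1.castSucc, mem_res.mp v.2⟩, fun h v => ?_⟩ rfl rfl
    obtain ⟨v, hv⟩ := v
    by_cases hlast : v = Fin.last n
    · subst hlast
      rcases fin2_cases (i (Fin.last n)) with h1 | h1
      · exact absurd h1 hb'
      rcases fin2_cases (j' ⟨Fin.last n, last_mem_facet hF'⟩) with h2 | h2
      · exact absurd h2 hb
      exact h1.trans h2.symm
    · obtain ⟨w, rfl⟩ := Fin.exists_castSucc_eq.mpr hlast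
      exact h ⟨w, mem_res.mpr hv⟩

end ConeProof

/-- `A_C` is unimodular iff the design matrix of the cone over `C` is unimodular. -/
theorem isUnimodular_iff_cone_isUnimodular {n : ℕ} (C : SComplex (Fin n)) :
    C.IsUnimodular ↔ (SComplex.cone C).IsUnimodular := by
  unfold SComplex.IsUnimodular
  rw [ConeProof.designMatrix_cone_eq C,
    intUnimodular_submatrix_iff (Matrix.fromBlocks (SComplex.designMatrix C) 0 0
      (SComplex.designMatrix C)) (ConeProof.rowEquiv C) ConeProof.colEquiv]
  exact intUnimodular_fromBlocks_iff _
end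

section
/- For all m, n ≥ 0, the disjoint union of an m-simplex and an n-simplex, Δ_m ⊔ Δ_n, is a unimodular simplicial complex. -/
open Finset

private lemma tu_two_classes {m n : Type} (A : Matrix m n ℤ) (p : m → Bool)
    (h : ∀ (j : n) (b : Bool), ∃ i : m, p i = b ∧ A i j = 1 ∧
      ∀ i' : m, p i' = b → A i' j ≠ 0 → i' = i) :
    A.IsTotallyUnimodular := by
  classical
  intro kk
  induction kk with
  | zero => intro f g _ _; exact ⟨1, by simp⟩
  | succ K ih =>
    intro f g hf hg
    by_cases hcase : ∀ x : Fin (K+1), ∃ i1 i2 : Fin (K+1), i1 ≠ i2 ∧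
        A (f i1) (g x) ≠ 0 ∧ A (f i2) (g x) ≠ 0
    · -- rows are linearly dependent
      set B := A.submatrix f g with hB
      set v : Fin (K+1) → ℤ := fun i => if p (f i) then 1 else -1 with hv
      have hvB : Matrix.vecMul v B = 0 := by
        funext x
        obtain ⟨iT, hpT, hT1, hTu⟩ := h (g x) true
        obtain ⟨iF, hpF, hF1, hFu⟩ := h (g x) false
        obtain ⟨i1, i2, h12, hn1, hn2⟩ := hcase x
        have key : ∀ i : Fin (K+1), A (f i) (g x) ≠ 0 → f i = iT ∨ f i = iF := by
          intro i hi
          cases hb : p (f i)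
          · exact Or.inr (hFu _ hb hi)
          · exact Or.inl (hTu _ hb hi)
        have hfne : f i1 ≠ f i2 := fun hcon => h12 (hf hcon)
        obtain ⟨a, b, hab, hfa, hfb⟩ : ∃ a b : Fin (K+1), a ≠ b ∧ f a = iT ∧ f b = iF := by
          rcases key i1 hn1 with h1 | h1 <;> rcases key i2 hn2 with h2 | h2
          · exact absurd (h1.trans h2.symm) hfne
          · exact ⟨i1, i2, h12, h1, h2⟩
          · exact ⟨i2, i1, h12.symm, h2, h1⟩
          · exact absurd (h1.trans h2.symm) hfne
        have hzero : ∀ i ∈ (univ : Finset (Fin (K+1))), i ∉ ({a, b} : Finset (Fin (K+1))) →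
            v i * B i x = 0 := by
          intro i _ hi
          simp only [mem_insert, mem_singleton, not_or] at hi
          by_cases hBi : A (f i) (g x) = 0
          · simp [hB, Matrix.submatrix_apply, hBi]
          · rcases key i hBi with hc | hc
            · exact absurd (hf (hc.trans hfa.symm)) hi.1
            · exact absurd (hf (hc.trans hfb.symm)) hi.2
        have : Matrix.vecMul v B x = ∑ i ∈ ({a, b} : Finset (Fin (K+1))), v i * B i x := by
          rw [Matrix.vecMul, dotProduct]
          exact (Finset.sum_subset (subset_univ _) hzero).symm
        rw [this, Finset.sum_pair hab]
        have hva : v a = 1 := by simp [hv, hfa, hpT]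
        have hvb : v b = -1 := by simp [hv, hfb, hpF]
        have hBa : B a x = 1 := by simp [hB, Matrix.submatrix_apply, hfa, hT1]
        have hBb : B b x = 1 := by simp [hB, Matrix.submatrix_apply, hfb, hF1]
        simp [hva, hvb, hBa, hBb]
      have h2 := congrArg (fun w => Matrix.vecMul w B.adjugate) hvB
      simp only [Matrix.vecMul_vecMul, Matrix.mul_adjugate, Matrix.zero_vecMul] at h2
      have h4 := congrFun h2 0
      simp only [Matrix.vecMul, dotProduct, Matrix.smul_apply, Matrix.one_apply,
        smul_eq_mul, mul_ite, mul_one, mul_zero, Finset.sum_ite_eq', Finset.mem_univ,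
        if_true, Pi.zero_apply] at h4
      have hv0 : v 0 = 1 ∨ v 0 = -1 := by
        by_cases hp : p (f 0) <;> simp [hv, hp]
      refine ⟨0, ?_⟩
      simp only [SignType.coe_zero]
      rcases hv0 with hv0 | hv0 <;> rw [hv0] at h4 <;> omega
    · push_neg at hcase
      obtain ⟨x, hx⟩ := hcase
      by_cases hnz : ∃ i0 : Fin (K+1), A (f i0) (g x) ≠ 0
      · obtain ⟨i0, hi0⟩ := hnz
        have hothers : ∀ i : Fin (K+1), i ≠ i0 → A (f i) (g x) = 0 := by
          intro i hi
          exact hx i0 i (fun hc => hi (hc.symm)) hi0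
        have hval : A (f i0) (g x) = 1 := by
          obtain ⟨iD, hpD, hD1, hDu⟩ := h (g x) (p (f i0))
          rw [hDu (f i0) rfl hi0]; exact hD1
        rw [Matrix.det_succ_column (A.submatrix f g) x]
        rw [Finset.sum_eq_single_of_mem i0 (mem_univ _) (by
          intro i _ hi
          simp [Matrix.submatrix_apply, hothers i hi])]
        simp only [Matrix.submatrix_apply, hval, mul_one, Matrix.submatrix_submatrix]
        obtain ⟨s, hs⟩ := ih (f ∘ i0.succAbove) (g ∘ x.succAbove)
          (hf.comp (Fin.succAbove_right_injective))
          (hg.comp (Fin.succAbove_right_injective))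
        rcases Nat.even_or_odd (↑i0 + ↑x) with he | he
        · exact ⟨s, by rw [he.neg_one_pow, ← hs]; ring⟩
        · exact ⟨-s, by rw [he.neg_one_pow, ← hs]; simp⟩
      · push_neg at hnz
        exact ⟨0, by
          simp only [SignType.coe_zero]
          exact (Matrix.det_eq_zero_of_column_eq_zero x
            (fun i => by simp [Matrix.submatrix_apply, hnz i])).symm⟩

private lemma disj_facets (m k : ℕ) (F : Finset (Fin (m + k + 2))) :
    F ∈ (SComplex.disjSimplices m k).facets ↔
      F = (univ.filter fun x : Fin (m + k + 2) => (x : ℕ) ≤ m) ∨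
      F = (univ.filter fun x : Fin (m + k + 2) => m < (x : ℕ)) := by
  classical
  set S1 : Finset (Fin (m + k + 2)) := univ.filter fun x => (x : ℕ) ≤ m with hS1
  set S2 : Finset (Fin (m + k + 2)) := univ.filter fun x => m < (x : ℕ) with hS2
  have hmem : ∀ G : Finset (Fin (m + k + 2)),
      G ∈ (SComplex.disjSimplices m k).faces ↔ G ⊆ S1 ∨ G ⊆ S2 := by
    intro G
    simp [SComplex.disjSimplices, SComplex.gen, hS1, hS2]
  have ha0 : (⟨0, by omega⟩ : Fin (m + k + 2)) ∈ S1 := by simp [hS1]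
  have ha0' : (⟨0, by omega⟩ : Fin (m + k + 2)) ∉ S2 := by simp [hS2]
  have ha1 : (⟨m + 1, by omega⟩ : Fin (m + k + 2)) ∈ S2 := by simp [hS2]
  have ha1' : (⟨m + 1, by omega⟩ : Fin (m + k + 2)) ∉ S1 := by simp [hS1]
  have h12 : ¬ S1 ⊆ S2 := fun hc => ha0' (hc ha0)
  have h21 : ¬ S2 ⊆ S1 := fun hc => ha1' (hc ha1)
  have hS1f : S1 ∈ (SComplex.disjSimplices m k).faces := (hmem S1).mpr (Or.inl subset_rfl)
  have hS2f : S2 ∈ (SComplex.disjSimplices m k).faces := (hmem S2).mpr (Or.inr subset_rfl)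
  constructor
  · intro hF
    simp only [SComplex.facets, mem_filter] at hF
    obtain ⟨hFf, hmax⟩ := hF
    rcases (hmem F).mp hFf with h | h
    · exact Or.inl (hmax S1 hS1f h)
    · exact Or.inr (hmax S2 hS2f h)
  · rintro (rfl | rfl) <;> simp only [SComplex.facets, mem_filter]
    · refine ⟨hS1f, fun G hG hSG => ?_⟩
      rcases (hmem G).mp hG with h | h
      · exact subset_antisymm hSG h
      · exact absurd (hSG.trans h) h12
    · refine ⟨hS2f, fun G hG hSG => ?_⟩
      rcases (hmem G).mp hG with h | h
      · exact absurd (hSG.trans h) h21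
      · exact subset_antisymm hSG h


/-- For all `m, k ≥ 0`, the disjoint union `Δ_m ⊔ Δ_k` of two simplices is unimodular. -/
theorem disjSimplices_isUnimodular (m k : ℕ) :
    (SComplex.disjSimplices m k).IsUnimodular := by
  classical
  set C := SComplex.disjSimplices m k with hC
  set S1 : Finset (Fin (m + k + 2)) := univ.filter fun x => (x : ℕ) ≤ m with hS1
  set S2 : Finset (Fin (m + k + 2)) := univ.filter fun x => m < (x : ℕ) with hS2
  have hS1S2 : S1 ≠ S2 := by
    intro hcon
    have ha0 : (⟨0, by omega⟩ : Fin (m + k + 2)) ∈ S1 := by simp [hS1]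
    have ha0' : (⟨0, by omega⟩ : Fin (m + k + 2)) ∉ S2 := by simp [hS2]
    rw [hcon] at ha0; exact ha0' ha0
  -- the key pointwise facts about the design matrix
  have key : ∀ (F : Finset (Fin (m + k + 2))) (hF : F ∈ C.facets)
      (i : (v : Fin (m + k + 2)) → Fin 2),
      C.designMatrix ⟨⟨F, hF⟩, fun v => i v.1⟩ i = 1 ∧
      ∀ r' : (G : {G // G ∈ C.facets}) × ((v : {v // v ∈ G.1}) → Fin 2),
        r'.1.1 = F → C.designMatrix r' i ≠ 0 → r' = ⟨⟨F, hF⟩, fun v => i v.1⟩ := by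
    intro F hF i
    constructor
    · simp [SComplex.designMatrix, SComplex.designMatrixD]
    · rintro ⟨⟨F', hF'⟩, j'⟩ hFF hne
      simp only at hFF
      subst hFF
      have hcond : ∀ v : {v // v ∈ F'}, i v.1 = j' v := by
        by_contra hc
        exact hne (by simp only [SComplex.designMatrix, SComplex.designMatrixD, if_neg hc])
      exact congrArg
        (Sigma.mk (β := fun G : {G // G ∈ C.facets} => (v : {v // v ∈ G.1}) → Fin 2)
          ⟨F', hF'⟩) (funext fun v => (hcond v).symm)
  have hTU : C.designMatrix.IsTotallyUnimodular := by
    apply tu_two_classes _ (fun r => decide (r.1.1 = S1))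
    intro i b
    cases b
    · -- class false: facet S2
      have hF2 : S2 ∈ C.facets := (disj_facets m k S2).mpr (Or.inr rfl)
      obtain ⟨h1, h2⟩ := key S2 hF2 i
      refine ⟨⟨⟨S2, hF2⟩, fun v => i v.1⟩, by simp [hS1S2.symm], h1, ?_⟩
      intro r' hp hne
      refine h2 r' ?_ hne
      rcases (disj_facets m k r'.1.1).mp r'.1.2 with hc | hc
      · simp [hc] at hp; exact absurd hS1.symm hp
      · exact hc
    · have hF1 : S1 ∈ C.facets := (disj_facets m k S1).mpr (Or.inl rfl)
      obtain ⟨h1, h2⟩ := key S1 hF1 i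
      exact ⟨⟨⟨S1, hF1⟩, fun v => i v.1⟩, by simp, h1, fun r' hp hne =>
        h2 r' (by simpa using hp) hne⟩
  refine ⟨1, one_ne_zero, fun r c => ?_⟩
  obtain ⟨s, hs⟩ := (Matrix.isTotallyUnimodular_iff _).mp hTU _ r c
  cases s
  · exact Or.inl (by simpa using hs.symm)
  · exact Or.inr (Or.inr (by simpa using hs.symm))
  · exact Or.inr (Or.inl (by simpa using hs.symm))
end

section
/- Let C be a simplicial complex on ground set [n]. For a minimal nonface S of C, a tuple i ∈ {0,1}^{[n]∖S}, and a tuple j ∈ {0,1}^S, let e_{i,j} ∈ ℝ^{{0,1}^n} denote the standard basis vector supported on the unique tuple k ∈ {0,1}^n agreeing with j on S and with i on [n]∖S. Then the set of vectors { Σ_{j ∈ {0,1}^S} (−1)^{‖j‖₁} e_{i,j} : S a minimal nonface of C, i ∈ {0,1}^{[n]∖S} }, where ‖j‖₁ is the number of coordinates of j equal to 1, spans the kernel of the linear map ℝ^{{0,1}^n} → ℝ^{rows} given by the matrix A_C. -/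
open Finset

namespace SpanAux

variable {n : ℕ}

def comb (S : Finset (Fin n)) (j : {v // v ∈ S} → Fin 2)
    (i : {v // v ∈ Sᶜ} → Fin 2) : (v : Fin n) → Fin 2 :=
  fun v => if h : v ∈ S then j ⟨v, h⟩ else i ⟨v, Finset.mem_compl.mpr h⟩

noncomputable def chi (T : Finset (Fin n)) : ((v : Fin n) → Fin 2) → ℝ :=
  fun k => ∏ v ∈ T, (-1 : ℝ) ^ ((k v : ℕ))

lemma val2 (a : Fin 2) : (a : ℕ) = if a = 1 then 1 else 0 := by
  fin_cases a <;> simp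

lemma neg_pow_succ2 (a : Fin 2) : (-1:ℝ)^(((a+1) : Fin 2) : ℕ) = -(-1:ℝ)^((a:ℕ)) := by
  fin_cases a
  · norm_num
  · norm_num [show ((1 + 1 : Fin 2) : ℕ) = 0 from rfl]

lemma add_one_ne (a : Fin 2) : a + 1 ≠ a := by fin_cases a <;> decide

lemma add_one_add_one (a : Fin 2) : a + 1 + 1 = a := by fin_cases a <;> decide

lemma sign_eq_prod (S : Finset (Fin n)) (j : {v // v ∈ S} → Fin 2) :
    (-1:ℝ)^((Finset.univ.filter fun v => j v = 1).card)
      = ∏ v ∈ S.attach, (-1:ℝ)^((j v : ℕ)) := by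
  rw [Finset.prod_pow_eq_pow_sum, Finset.card_filter, Finset.univ_eq_attach]
  congr 1
  exact Finset.sum_congr rfl fun v _ => (val2 (j v)).symm

lemma comb_eq_iff (S : Finset (Fin n)) (j : {v // v ∈ S} → Fin 2)
    (i : {v // v ∈ Sᶜ} → Fin 2) (k : (v : Fin n) → Fin 2) :
    k = comb S j i ↔ (j = fun v => k v.1) ∧ (i = fun v => k v.1) := by
  constructor
  · rintro rfl
    constructor
    · funext v; simp [comb, v.2]
    · funext v
      have : v.1 ∉ S := Finset.mem_compl.mp v.2
      simp [comb, this]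
  · rintro ⟨rfl, rfl⟩
    funext v
    by_cases h : v ∈ S <;> simp [comb, h]

lemma comb_update (S : Finset (Fin n)) (j : {v // v ∈ S} → Fin 2)
    (i : {v // v ∈ Sᶜ} → Fin 2) (v0 : {v // v ∈ S}) (b : Fin 2) :
    comb S (Function.update j v0 b) i = Function.update (comb S j i) v0.1 b := by
  funext v
  by_cases h : v = v0.1
  · subst h
    simp [comb, v0.2]
  · rw [Function.update_of_ne h]
    by_cases hS : v ∈ S
    · simp only [comb, dif_pos hS]
      rw [Function.update_of_ne (by simpa [Subtype.ext_iff] using h)]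
    · simp [comb, hS]


lemma sign_update (S : Finset (Fin n)) (j : {v // v ∈ S} → Fin 2) (v0 : {v // v ∈ S}) :
    ((-1:ℝ)^((Finset.univ.filter fun v =>
        Function.update j v0 (j v0 + 1) v = 1).card))
      = -(-1:ℝ)^((Finset.univ.filter fun v => j v = 1).card) := by
  rw [sign_eq_prod, sign_eq_prod]
  have hfun : (fun v => (-1:ℝ)^((Function.update j v0 (j v0 + 1) v : ℕ)))
      = Function.update (fun v => (-1:ℝ)^((j v : ℕ))) v0 ((-1:ℝ)^(((j v0 + 1) : Fin 2) : ℕ)) := by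
    funext v
    exact Function.apply_update (fun _ a => (-1:ℝ)^((a : Fin 2) : ℕ)) j v0 (j v0 + 1) v
  calc ∏ v ∈ S.attach, (-1:ℝ)^((Function.update j v0 (j v0 + 1) v : ℕ))
      = ∏ v ∈ S.attach,
          Function.update (fun v => (-1:ℝ)^((j v : ℕ))) v0 ((-1:ℝ)^(((j v0 + 1) : Fin 2) : ℕ)) v := by
        rw [hfun]
    _ = (-1:ℝ)^(((j v0 + 1) : Fin 2) : ℕ) * ∏ v ∈ S.attach \ {v0}, (-1:ℝ)^((j v : ℕ)) := by
        rw [Finset.prod_update_of_mem (S.mem_attach v0)]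
    _ = -((-1:ℝ)^((j v0 : ℕ)) * ∏ v ∈ S.attach \ {v0}, (-1:ℝ)^((j v : ℕ))) := by
        rw [neg_pow_succ2]; ring
    _ = -∏ v ∈ S.attach, (-1:ℝ)^((j v : ℕ)) := by
        conv_rhs => rw [Finset.prod_eq_mul_prod_sdiff_singleton_of_mem (S.mem_attach v0)
          (fun v => (-1:ℝ)^((j v : ℕ)))]

lemma exists_minNonface (C : SComplex (Fin n)) (T : Finset (Fin n)) (hT : T ∉ C.faces) :
    ∃ S ⊆ T, C.MinNonface S := by
  induction T using Finset.strongInduction with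
  | _ T ih =>
    by_cases h : ∀ t ⊂ T, t ∈ C.faces
    · exact ⟨T, subset_rfl, hT, h⟩
    · push_neg at h
      obtain ⟨t, htT, ht⟩ := h
      obtain ⟨S, hST, hS⟩ := ih t htT ht
      exact ⟨S, hST.trans htT.subset, hS⟩

lemma exists_facet (C : SComplex (Fin n)) {T} (hT : T ∈ C.faces) :
    ∃ F ∈ C.facets, T ⊆ F := by
  obtain ⟨F, hF, hmax⟩ := (C.faces.filter (T ⊆ ·)).exists_max_image Finset.card
    ⟨T, by simp [hT]⟩
  simp only [Finset.mem_filter] at hF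
  refine ⟨F, ?_, hF.2⟩
  simp only [SComplex.facets, Finset.mem_filter]
  refine ⟨hF.1, fun G hG hFG => ?_⟩
  exact Finset.eq_of_subset_of_card_le hFG
    (hmax G (Finset.mem_filter.mpr ⟨hG, hF.2.trans hFG⟩))

lemma factor2 (a b : Fin 2) :
    (-1:ℝ)^((a:ℕ)) * (-1:ℝ)^((b:ℕ)) + 1 = if a = b then 2 else 0 := by
  fin_cases a <;> fin_cases b <;> norm_num

lemma chi_orth (k k' : (v : Fin n) → Fin 2) :
    ∑ T : Finset (Fin n), chi T k * chi T k' = if k = k' then (2:ℝ)^n else 0 := by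
  have h1 : ∀ T : Finset (Fin n), chi T k * chi T k'
      = ∏ v ∈ T, ((-1:ℝ)^((k v : ℕ)) * (-1:ℝ)^((k' v : ℕ))) := by
    intro T; rw [chi, chi, ← Finset.prod_mul_distrib]
  simp only [h1]
  have h2 : ∑ T : Finset (Fin n), ∏ v ∈ T, ((-1:ℝ)^((k v : ℕ)) * (-1:ℝ)^((k' v : ℕ)))
      = ∏ v : Fin n, ((-1:ℝ)^((k v : ℕ)) * (-1:ℝ)^((k' v : ℕ)) + 1) := by
    rw [Finset.prod_add, Finset.powerset_univ]
    exact Finset.sum_congr rfl fun t _ => by simp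
  rw [h2]
  simp only [factor2]
  by_cases hkk : k = k'
  · subst hkk
    simp
  · obtain ⟨v, hv⟩ : ∃ v, k v ≠ k' v := by
      by_contra h; push_neg at h; exact hkk (funext h)
    rw [if_neg hkk]
    refine Finset.prod_eq_zero (Finset.mem_univ v) ?_
    simp [hv]

noncomputable def wvec (S : Finset (Fin n)) (i : {v // v ∈ Sᶜ} → Fin 2) :
    ((v : Fin n) → Fin 2) → ℝ :=
  ∑ j : {v // v ∈ S} → Fin 2,
    ((-1 : ℝ) ^ (Finset.univ.filter fun v => j v = 1).card) •
      (fun k => if k = comb S j i then (1:ℝ) else 0)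

lemma chi_eq_sum_wvec (S T : Finset (Fin n)) (hST : S ⊆ T) :
    chi T = ∑ i : {v // v ∈ Sᶜ} → Fin 2,
      (∏ v ∈ (T \ S).attach,
        (-1:ℝ)^((i ⟨v.1, Finset.mem_compl.mpr (Finset.mem_sdiff.mp v.2).2⟩ : ℕ))) • wvec S i := by
  funext k
  set jk : {v // v ∈ S} → Fin 2 := fun v => k v.1 with hjk
  set ik : {v // v ∈ Sᶜ} → Fin 2 := fun v => k v.1 with hik
  have hcond : ∀ (i : {v // v ∈ Sᶜ} → Fin 2) (j : {v // v ∈ S} → Fin 2),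
      (if k = comb S j i then (1:ℝ) else 0)
        = (if j = jk then (1:ℝ) else 0) * (if i = ik then (1:ℝ) else 0) := by
    intro i j
    simp only [comb_eq_iff S j i k]
    by_cases h1 : j = jk <;> by_cases h2 : i = ik <;>
      simp [hjk, hik] at h1 h2 ⊢ <;> simp [h1, h2]
  rw [Finset.sum_apply]
  simp only [Pi.smul_apply, smul_eq_mul, wvec, Finset.sum_apply, Pi.smul_apply, smul_eq_mul]
  simp only [hcond]
  simp only [mul_ite, mul_one, mul_zero, ite_mul, zero_mul, one_mul]
  simp only [Finset.sum_ite_irrel, Finset.sum_const_zero, Finset.sum_ite_eq',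
    Finset.mem_univ, if_true, mul_ite, mul_zero]
  rw [sign_eq_prod S jk]
  simp only [hjk, hik]
  rw [Finset.prod_attach (T \ S) (fun v => (-1:ℝ)^((k v : ℕ))),
    Finset.prod_attach S (fun v => (-1:ℝ)^((k v : ℕ))),
    Finset.prod_sdiff hST]
  rfl

lemma entry (C : SComplex (Fin n)) (F : Finset (Fin n)) (hF : F ∈ C.facets)
    (j0 : {v // v ∈ F} → Fin 2) (k : (v : Fin n) → Fin 2) :
    (C.designMatrix.map ((↑·) : ℤ → ℝ)) ⟨⟨F, hF⟩, j0⟩ k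
      = if (∀ v : {v // v ∈ F}, k v.1 = j0 v) then (1:ℝ) else 0 := by
  simp [SComplex.designMatrix, SComplex.designMatrixD, Matrix.map_apply, apply_ite]

lemma wvec_mem_ker (C : SComplex (Fin n)) (S : Finset (Fin n)) (hS : C.MinNonface S)
    (i : {v // v ∈ Sᶜ} → Fin 2) :
    wvec S i ∈ LinearMap.ker (Matrix.mulVecLin ((C.designMatrix).map ((↑·) : ℤ → ℝ))) := by
  rw [LinearMap.mem_ker]
  funext r
  obtain ⟨⟨F, hF⟩, j0⟩ := r
  have hFface : F ∈ C.faces := by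
    have := hF
    simp only [SComplex.facets, Finset.mem_filter] at this
    exact this.1
  have hnotsub : ¬ S ⊆ F := fun h => hS.1 (C.down_closed F hFface S h)
  obtain ⟨v0, hv0S, hv0F⟩ := Finset.not_subset.mp hnotsub
  set v0' : {v // v ∈ S} := ⟨v0, hv0S⟩ with hv0'
  rw [Matrix.mulVecLin_apply]
  simp only [Matrix.mulVec, dotProduct, wvec, Finset.sum_apply, Pi.smul_apply,
    smul_eq_mul, Pi.zero_apply]
  simp only [Finset.mul_sum]
  rw [Finset.sum_comm]
  simp only [mul_ite, mul_one, mul_zero]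
  simp only [Finset.sum_ite_eq', Finset.mem_univ, if_true]
  simp only [entry C F hF j0]
  refine Finset.sum_ninvolution (fun j => Function.update j v0' (j v0' + 1)) ?_ ?_
    (fun _ => Finset.mem_univ _) ?_
  · intro j
    have hupd : ∀ v : {v // v ∈ F},
        comb S (Function.update j v0' (j v0' + 1)) i v.1 = comb S j i v.1 := by
      intro v
      rw [comb_update]
      have hne : (v : Fin n) ≠ v0 := by
        intro h
        exact hv0F (h ▸ v.2)
      exact Function.update_of_ne hne _ _
    have hiff : (∀ v : {v // v ∈ F}, comb S (Function.update j v0' (j v0' + 1)) i v.1 = j0 v)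
        ↔ (∀ v : {v // v ∈ F}, comb S j i v.1 = j0 v) :=
      forall_congr' fun v => by rw [hupd v]
    have hsign := sign_update S j v0'
    by_cases hP : ∀ v : {v // v ∈ F}, comb S j i v.1 = j0 v
    · rw [if_pos hP, if_pos (hiff.mpr hP), hsign]; ring
    · rw [if_neg hP, if_neg (fun h => hP (hiff.mp h))]; ring
  · intro j _
    intro h
    have := congrFun h v0'
    simp only [Function.update_self] at this
    exact add_one_ne (j v0') this
  · intro j
    funext v
    by_cases h : v = v0'
    · subst h
      simp only [Function.update_self]
      exact add_one_add_one _
    · simp only [Function.update_of_ne h]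

lemma chi_face_orth (C : SComplex (Fin n)) (x : ((v : Fin n) → Fin 2) → ℝ)
    (hrow : ∀ r, ∑ k, (C.designMatrix.map ((↑·) : ℤ → ℝ)) r k * x k = 0)
    (T : Finset (Fin n)) (hT : T ∈ C.faces) :
    ∑ k, chi T k * x k = 0 := by
  obtain ⟨F, hFm, hTF⟩ := exists_facet C hT
  set d : ({v // v ∈ F} → Fin 2) → ℝ := fun j0 =>
    ∏ v ∈ T.attach, (-1:ℝ)^((j0 ⟨v.1, hTF v.2⟩ : ℕ)) with hd
  have hchi : ∀ k, chi T k = ∑ j0 : {v // v ∈ F} → Fin 2,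
      d j0 * (C.designMatrix.map ((↑·) : ℤ → ℝ)) ⟨⟨F, hFm⟩, j0⟩ k := by
    intro k
    simp only [entry C F hFm]
    simp only [mul_ite, mul_one, mul_zero]
    have hc : ∀ j0 : {v // v ∈ F} → Fin 2,
        (∀ v : {v // v ∈ F}, k v.1 = j0 v) ↔ ((fun v : {v // v ∈ F} => k v.1) = j0) :=
      fun j0 => funext_iff.symm
    simp only [hc]
    rw [Finset.sum_ite_eq, if_pos (Finset.mem_univ _)]
    exact (Finset.prod_attach T (fun v => (-1:ℝ)^((k v : ℕ)))).symm
  calc ∑ k, chi T k * x k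
      = ∑ k, (∑ j0 : {v // v ∈ F} → Fin 2,
          d j0 * (C.designMatrix.map ((↑·) : ℤ → ℝ)) ⟨⟨F, hFm⟩, j0⟩ k) * x k :=
        Finset.sum_congr rfl fun k _ => by rw [← hchi k]
    _ = ∑ j0 : {v // v ∈ F} → Fin 2,
          d j0 * ∑ k, (C.designMatrix.map ((↑·) : ℤ → ℝ)) ⟨⟨F, hFm⟩, j0⟩ k * x k := by
        simp only [Finset.sum_mul]
        rw [Finset.sum_comm]
        simp only [mul_assoc, ← Finset.mul_sum]
    _ = 0 := by
        simp only [hrow]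
        simp

end SpanAux

open SpanAux in
open SComplex in
/-- The vectors `∑_{j ∈ {0,1}^S} (-1)^{‖j‖₁} e_{i,j}`, for `S` a minimal nonface of `C`
and `i ∈ {0,1}^{[n]∖S}`, span the kernel of the linear map given by the binary design
matrix `A_C`.  Here `e_{i,j}` is the standard basis vector supported on the unique tuple
agreeing with `j` on `S` and with `i` on `[n]∖S`, and `‖j‖₁` counts the coordinates of
`j` equal to `1`. -/
theorem span_minNonface_vectors_eq_ker {n : ℕ} (C : SComplex (Fin n)) :
    Submodule.span ℝ
      { w : ((v : Fin n) → Fin 2) → ℝ |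
        ∃ S : Finset (Fin n), C.MinNonface S ∧
          ∃ i : {v // v ∈ Sᶜ} → Fin 2,
            w = ∑ j : {v // v ∈ S} → Fin 2,
              ((-1 : ℝ) ^ (Finset.univ.filter fun v => j v = 1).card) •
                (fun k : (v : Fin n) → Fin 2 =>
                  if k = (fun v : Fin n =>
                      if h : v ∈ S then j ⟨v, h⟩ else i ⟨v, Finset.mem_compl.mpr h⟩)
                  then (1 : ℝ) else 0) }
      = LinearMap.ker (Matrix.mulVecLin ((C.designMatrix).map ((↑·) : ℤ → ℝ))) := by
  apply le_antisymm
  · rw [Submodule.span_le]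
    rintro w ⟨S, hS, i, rfl⟩
    exact wvec_mem_ker C S hS i
  · intro x hx
    rw [LinearMap.mem_ker] at hx
    have hrow : ∀ r, ∑ k, (C.designMatrix.map ((↑·) : ℤ → ℝ)) r k * x k = 0 := by
      intro r
      have h := congrFun hx r
      simpa [Matrix.mulVecLin_apply, Matrix.mulVec, dotProduct] using h
    have hface := chi_face_orth C x hrow
    have hexp : x = ∑ T ∈ Finset.univ.filter (fun T => T ∉ C.faces),
        ((∑ k', chi T k' * x k') / 2^n) • chi T := by
      funext k
      have hall : ∑ T : Finset (Fin n), (∑ k', chi T k' * x k') * chi T k = (2:ℝ)^n * x k := by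
        calc ∑ T : Finset (Fin n), (∑ k', chi T k' * x k') * chi T k
            = ∑ T : Finset (Fin n), ∑ k', (chi T k * chi T k') * x k' := by
              refine Finset.sum_congr rfl fun T _ => ?_
              rw [Finset.sum_mul]
              exact Finset.sum_congr rfl fun k' _ => by ring
          _ = ∑ k', (∑ T : Finset (Fin n), chi T k * chi T k') * x k' := by
              rw [Finset.sum_comm]
              exact Finset.sum_congr rfl fun k' _ => (Finset.sum_mul _ _ _).symm
          _ = ∑ k', (if k = k' then (2:ℝ)^n else 0) * x k' := by
              simp only [chi_orth]
          _ = (2:ℝ)^n * x k := by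
              simp only [ite_mul, zero_mul]
              rw [Finset.sum_ite_eq, if_pos (Finset.mem_univ _)]
      have h2n : ((2:ℝ)^n) ≠ 0 := by positivity
      rw [Finset.sum_apply]
      simp only [Pi.smul_apply, smul_eq_mul]
      rw [Finset.sum_filter]
      have hcoef : ∀ T : Finset (Fin n),
          (if T ∉ C.faces then (∑ k', chi T k' * x k')/2^n * chi T k else 0)
            = (∑ k', chi T k' * x k')/2^n * chi T k := by
        intro T
        by_cases hT : T ∉ C.faces
        · rw [if_pos hT]
        · rw [if_neg hT, hface T (not_not.mp hT)]
          simp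
      simp only [hcoef]
      rw [eq_comm]
      calc ∑ T : Finset (Fin n), (∑ k', chi T k' * x k')/2^n * chi T k
          = (∑ T : Finset (Fin n), (∑ k', chi T k' * x k') * chi T k)/2^n := by
            rw [Finset.sum_div]
            exact Finset.sum_congr rfl fun T _ => by ring
        _ = x k := by
            rw [hall]
            field_simp
    rw [hexp]
    refine Submodule.sum_mem _ fun T hT => Submodule.smul_mem _ _ ?_
    obtain ⟨S, hSsub, hSmin⟩ := exists_minNonface C T (Finset.mem_filter.mp hT).2
    rw [chi_eq_sum_wvec S T hSsub]
    refine Submodule.sum_mem _ fun i _ => Submodule.smul_mem _ _ ?_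
    exact Submodule.subset_span ⟨S, hSmin, i, rfl⟩
end
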